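/- A permutation w ∈ S_n is descending if and only if it is separable; that is, w can be written as w = w_{J_k}⋯w_{J_1} for some increasing chain of subsets J_1 ⊂ J_2 ⊂ ⋯ ⊂ J_k of the set of simple transpositions {s_1,…,s_{n−1}} (where w_J denotes the longest element of the parabolic subgroup generated by J) if and only if w avoids the patterns 2413 and 3142. -/

import Mathlib

namespace KLPaper

open Equiv

/-! ### Partitions and standard Young tableaux, represented as lists of rows -/

/-- `lam` is a partition of `n`: a weakly decreasing list of positive parts summing to `n`. -/
def IsPartition (n : ℕ) (lam : List ℕ) : Prop :=
  lam.Pairwise (· ≥ ·) ∧ (∀ x ∈ lam, 0 < x) ∧ lam.sum = n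

/-- The entry of a tableau in row `i`, column `j` (0-based); `0` if out of range. -/
def entryAt (T : List (List ℕ)) (i j : ℕ) : ℕ := (T.getD i []).getD j 0

/-- `T` is a standard Young tableau of shape `lam`: rows have the prescribed lengths,
rows and columns strictly increase, and the multiset of entries is `{1, …, n}`. -/
def IsSYT (lam : List ℕ) (T : List (List ℕ)) : Prop :=
  T.map List.length = lam ∧
  (∀ r ∈ T, r.Pairwise (· < ·)) ∧
  (∀ i j : ℕ, i + 1 < T.length → j < (T.getD (i + 1) []).length →
    entryAt T i j < entryAt T (i + 1) j) ∧
  T.flatten.Perm (List.range' 1 lam.sum)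

/-- The (0-based) index of the row of a tableau containing the value `v`. -/
def rowOf (T : List (List ℕ)) (v : ℕ) : ℕ := T.findIdx (fun r => r.contains v)

/-- The (0-based) index of the column of a tableau containing the value `v`. -/
def colOf (T : List (List ℕ)) (v : ℕ) : ℕ := (T.getD (rowOf T v) []).idxOf v

/-- `j` is a descent of `T` : the value `j+1` lies in a strictly lower row than `j`. -/
def Descent (T : List (List ℕ)) (j : ℕ) : Prop := rowOf T j < rowOf T (j + 1)

/-- The number of removable boxes of `lam` occurring in the rows `0, …, upto - 1`. -/
def removableCount (lam : List ℕ) (upto : ℕ) : ℕ :=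
  ((List.range upto).filter (fun i => decide (lam.getD (i + 1) 0 < lam.getD i 0))).length

/-- The total number of removable boxes of a partition. -/
def numRemovable (lam : List ℕ) : ℕ := removableCount lam lam.length

/-- The (1-based, numbered from the top) list of rows containing removable boxes. -/
def removableRows (lam : List ℕ) : List ℕ :=
  (List.range lam.length).filter (fun i => decide (lam.getD (i + 1) 0 < lam.getD i 0))

/-- The index of a standard Young tableau: the (1-based, counted from the top) number of the
removable box containing the largest entry `n`. -/
def idx (T : List (List ℕ)) : ℕ :=
  removableCount (T.map List.length) (rowOf T T.flatten.length + 1)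

/-- Delete the `i`-th (1-based) removable box from a partition. -/
def deleteRemovable (lam : List ℕ) (i : ℕ) : List ℕ :=
  let row := (removableRows lam).getD (i - 1) 0
  (lam.set row (lam.getD row 0 - 1)).filter (fun x => decide (0 < x))

/-- Delete the box containing the largest entry from a standard Young tableau. -/
def deleteMax (T : List (List ℕ)) : List (List ℕ) :=
  let i := rowOf T T.flatten.length
  (T.set i ((T.getD i []).dropLast)).filter (fun r => !r.isEmpty)

/-! ### Promotion and (partial) evacuation -/

/-- Overwrite the entry of `T` in position `(i, j)` with `v`. -/
def setEntry (T : List (List ℕ)) (i j v : ℕ) : List (List ℕ) :=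
  T.set i ((T.getD i []).set j v)

/-- Slide a hole at position `(i, j)` north-west to the corner `(0,0)`, at each step swapping
the hole with the larger of the entries above it and to its left. -/
def slideNW : ℕ → ℕ → ℕ → List (List ℕ) → List (List ℕ)
  | 0, _, _, T => T
  | fuel + 1, i, j, T =>
    if i = 0 ∧ j = 0 then T
    else if i = 0 then slideNW fuel i (j - 1) (setEntry T i j (entryAt T i (j - 1)))
    else if j = 0 then slideNW fuel (i - 1) j (setEntry T i j (entryAt T (i - 1) j))
    else if entryAt T i (j - 1) < entryAt T (i - 1) j then
      slideNW fuel (i - 1) j (setEntry T i j (entryAt T (i - 1) j))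
    else slideNW fuel i (j - 1) (setEntry T i j (entryAt T i (j - 1)))

/-- Jeu-de-taquin promotion of a standard Young tableau: remove the largest entry, slide the
hole to the north-west corner, increment every entry, and place `1` in the corner. -/
def promote (T : List (List ℕ)) : List (List ℕ) :=
  let n := T.flatten.length
  let i := rowOf T n
  let j := colOf T n
  let T' := slideNW (i + j) i j T
  setEntry (T'.map (fun r => r.map (· + 1))) 0 0 1

/-- Slide a hole at `(i, j)` south-east, at each step swapping the hole with the smaller of
its right and lower neighbours among the entries `≤ m`; stops when no such neighbour exists,
returning the resulting filling and the final position of the hole. -/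
def slideOut (m : ℕ) : ℕ → ℕ → ℕ → List (List ℕ) → List (List ℕ) × ℕ × ℕ
  | 0, i, j, T => (T, i, j)
  | fuel + 1, i, j, T =>
    let r := entryAt T i (j + 1)
    let d := entryAt T (i + 1) j
    let rOk := decide (1 ≤ r ∧ r ≤ m)
    let dOk := decide (1 ≤ d ∧ d ≤ m)
    if rOk && dOk then
      if r < d then slideOut m fuel i (j + 1) (setEntry T i j r)
      else slideOut m fuel (i + 1) j (setEntry T i j d)
    else if rOk then slideOut m fuel i (j + 1) (setEntry T i j r)
    else if dOk then slideOut m fuel (i + 1) j (setEntry T i j d)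
    else (T, i, j)

/-- Inverse promotion applied to the sub-standard-tableau consisting of the entries
`1, …, m` of `T` (the remaining entries are fixed): remove the entry `1`, slide the hole
south-east within the unfixed region, decrement the remaining unfixed entries and place `m`
in the final position of the hole. -/
def prInvOn (T : List (List ℕ)) (m : ℕ) : List (List ℕ) :=
  let res := slideOut m T.flatten.length 0 0 T
  setEntry (res.1.map (fun row => row.map (fun v => if 2 ≤ v ∧ v ≤ m then v - 1 else v)))
    res.2.1 res.2.2 m

/-- The partial evacuation `ev_k`: starting with the `k` smallest entries unfixed, repeatedly
perform inverse promotion on the unfixed entries and fix the largest unfixed entry.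
`evacOn T n` (where `n` is the number of boxes) is the Schützenberger involution. -/
def evacOn : List (List ℕ) → ℕ → List (List ℕ)
  | T, 0 => T
  | T, m + 1 => evacOn (prInvOn T (m + 1)) m

/-! ### RSK -/

/-- Schensted insertion of `x` into a row: returns the new row and the bumped entry. -/
def insertRow : List ℕ → ℕ → List ℕ × Option ℕ
  | [], x => ([x], none)
  | y :: ys, x =>
    if x < y then (x :: ys, some y)
    else
      let p := insertRow ys x
      (y :: p.1, p.2)

/-- Schensted row insertion of `x` into a tableau. -/
def insertTab : List (List ℕ) → ℕ → List (List ℕ)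
  | [], x => [[x]]
  | r :: rs, x =>
    let p := insertRow r x
    match p.2 with
    | none => p.1 :: rs
    | some y => p.1 :: insertTab rs y

/-- Add the label `k` to the recording tableau `Q` in the unique new box of `P'`. -/
def addBox (Q P' : List (List ℕ)) (k : ℕ) : List (List ℕ) :=
  match (List.range P'.length).find?
      (fun i => decide ((Q.getD i []).length < (P'.getD i []).length)) with
  | some i => if i < Q.length then Q.set i ((Q.getD i []) ++ [k]) else Q ++ [[k]]
  | none => Q

/-- RSK insertion of a word, producing the pair (insertion tableau, recording tableau). -/
def RSKword : List ℕ → ℕ → List (List ℕ) × List (List ℕ) → List (List ℕ) × List (List ℕ)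
  | [], _, PQ => PQ
  | x :: xs, k, PQ =>
    let P' := insertTab PQ.1 x
    RSKword xs (k + 1) (P', addBox PQ.2 P' k)

/-- The one-line notation (with values `1, …, n`) of a permutation of `Fin n`. -/
def oneLine (n : ℕ) (v : Perm (Fin n)) : List ℕ :=
  (List.finRange n).map (fun i => (v i : ℕ) + 1)

/-- The RSK correspondence `v ↝ (P, Q)` for permutations. -/
def RSKmap (n : ℕ) (v : Perm (Fin n)) : List (List ℕ) × List (List ℕ) :=
  RSKword (oneLine n v) 1 ([], [])

/-! ### Coxeter length, Bruhat order, Kazhdan–Lusztig polynomials for `S_n` -/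

/-- `s` is a simple transposition `(j, j+1)`. -/
def IsSimpleT {n : ℕ} (s : Perm (Fin n)) : Prop :=
  ∃ j : ℕ, ∃ h : j + 1 < n, s = Equiv.swap ⟨j, Nat.lt_of_succ_lt h⟩ ⟨j + 1, h⟩

/-- The Coxeter length of a permutation: the minimal length of a word in the
simple transpositions expressing it. -/
noncomputable def len {n : ℕ} (w : Perm (Fin n)) : ℕ :=
  sInf {k | ∃ L : List (Perm (Fin n)), L.length = k ∧ (∀ s ∈ L, IsSimpleT s) ∧ L.prod = w}

/-- One step in the Bruhat order: multiply by a transposition, increasing the length. -/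
def BruhatStep {n : ℕ} (x y : Perm (Fin n)) : Prop :=
  (∃ i j : Fin n, i ≠ j ∧ y = x * Equiv.swap i j) ∧ len x < len y

/-- The Bruhat order on `S_n`. -/
def BruhatLe {n : ℕ} : Perm (Fin n) → Perm (Fin n) → Prop :=
  Relation.ReflTransGen BruhatStep

/-- The strict Bruhat order on `S_n`. -/
def BruhatLt {n : ℕ} (x y : Perm (Fin n)) : Prop := BruhatLe x y ∧ x ≠ y

theorem bruhatLe_len_le {n : ℕ} {x y : Perm (Fin n)} (h : BruhatLe x y) : len x ≤ len y := by
  induction h with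
  | refl => exact le_rfl
  | tail _ h2 ih => exact ih.trans h2.2.le

theorem bruhatLt_len_lt {n : ℕ} {x y : Perm (Fin n)} (h : BruhatLt x y) : len x < len y := by
  rcases Relation.ReflTransGen.cases_head h.1 with rfl | ⟨c, hc, hcy⟩
  · exact absurd rfl h.2
  · exact lt_of_lt_of_le hc.2 (bruhatLe_len_le hcy)

open Classical in
/-- A choice of simple transposition `s` with `len (s * w) < len w`, if one exists. -/
noncomputable def descChoice {n : ℕ} (w : Perm (Fin n)) : Option (Perm (Fin n)) :=
  if h : ∃ s : Perm (Fin n), IsSimpleT s ∧ len (s * w) < len w then some h.choose else none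

theorem descChoice_spec {n : ℕ} {w s : Perm (Fin n)} (h : descChoice w = some s) :
    len (s * w) < len w := by
  unfold descChoice at h
  split at h
  · rename_i hex
    obtain rfl : hex.choose = s := Option.some.inj h
    exact hex.choose_spec.2
  · exact absurd h (by simp)

open Classical in
/-- The Kazhdan–Lusztig polynomials `P_{v,w}` of the symmetric group, defined through the
standard recursion: `P_{w,w} = 1`, `P_{v,w} = 0` unless `v ≤ w` in Bruhat order, and for a
simple reflection `s` with `sw < w`,
`P_{v,w} = q^{1-c} P_{sv,sw} + q^c P_{v,sw} - ∑_{v ≤ z < sw, sz < z} μ(z,sw) q^{(ℓ(w)-ℓ(z))/2} P_{v,z}`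
where `c = 1` if `sv < v` and `c = 0` otherwise, and `μ(z,w')` is the coefficient of
`q^{(ℓ(w')-ℓ(z)-1)/2}` in `P_{z,w'}` (zero unless `ℓ(w') - ℓ(z)` is odd). -/
noncomputable def KLpoly {n : ℕ} (v w : Perm (Fin n)) : Polynomial ℤ :=
  if v = w then 1
  else if ¬ BruhatLt v w then 0
  else
    match hd : descChoice w with
    | none => 0
    | some s =>
      have hlt : len (s * w) < len w := descChoice_spec hd
      Polynomial.X ^ (if len (s * v) < len v then 0 else 1) * KLpoly (s * v) (s * w)
      + Polynomial.X ^ (if len (s * v) < len v then 1 else 0) * KLpoly v (s * w)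
      - ∑ z ∈ (Finset.univ.filter (fun z : Perm (Fin n) =>
            BruhatLe v z ∧ BruhatLt z (s * w) ∧ len (s * z) < len z ∧
              (len (s * w) - len z) % 2 = 1)).attach,
          Polynomial.C ((KLpoly z.1 (s * w)).coeff ((len (s * w) - len z.1 - 1) / 2))
            * Polynomial.X ^ ((len w - len z.1) / 2) * KLpoly v z.1
termination_by len w
decreasing_by
  · exact hlt
  · exact hlt
  · exact hlt
  · have hz := z.2
    simp only [Finset.mem_filter] at hz
    exact lt_trans (bruhatLt_len_lt hz.2.2.1) hlt

open Classical in
/-- The Kazhdan–Lusztig `μ`-coefficient for a pair of permutations: the coefficient of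
`q^{(ℓ(w)-ℓ(v)-1)/2}` in `P_{v,w}` for `v < w`, extended symmetrically, and `0` if `v` and
`w` are Bruhat-incomparable (or `ℓ(w) - ℓ(v)` is even). -/
noncomputable def muBarP {n : ℕ} (v w : Perm (Fin n)) : ℤ :=
  if BruhatLt v w ∧ (len w - len v) % 2 = 1 then
    (KLpoly v w).coeff ((len w - len v - 1) / 2)
  else if BruhatLt w v ∧ (len v - len w) % 2 = 1 then
    (KLpoly w v).coeff ((len v - len w - 1) / 2)
  else 0

/-! ### The row-superstandard recording tableau and `μ̄` for tableaux -/

/-- Auxiliary: fill rows consecutively starting from `start`. -/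
def rowStdAux : List ℕ → ℕ → List (List ℕ)
  | [], _ => []
  | a :: rest, start => ((List.range a).map (start + ·)) :: rowStdAux rest (start + a)

/-- The row-superstandard tableau of a given shape: `1, 2, …` filled row by row. -/
def rowStd (lam : List ℕ) : List (List ℕ) := rowStdAux lam 1

open Classical in
/-- The Kazhdan–Lusztig `μ̄`-coefficient for a pair of standard Young tableaux of the same
shape with `n` boxes: `μ̄(T,R) = μ̄(v,w)` where `v ↝ (T,Q)`, `w ↝ (R,Q)` under RSK for a
fixed recording tableau `Q` of that shape. -/
noncomputable def muBarTab (n : ℕ) (T R : List (List ℕ)) : ℤ :=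
  if hT : ∃ v : Perm (Fin n), RSKmap n v = (T, rowStd (T.map List.length)) then
    if hR : ∃ w : Perm (Fin n), RSKmap n w = (R, rowStd (T.map List.length)) then
      muBarP hT.choose hR.choose
    else 0
  else 0

/-! ### The Specht module with its Kazhdan–Lusztig basis -/

/-- The Kazhdan–Lusztig basis vector `C_T` of the Specht module, realised inside the space of
complex-valued functions on the standard Young tableaux of shape `lam`. -/
def KLvec {lam : List ℕ} (T : {T : List (List ℕ) // IsSYT lam T}) :
    {T : List (List ℕ) // IsSYT lam T} → ℂ :=
  fun R => if R = T then 1 else 0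

open Classical in
/-- `ρ` is an action of `S_n` on the span of the tableaux of shape `lam` realising the
Kazhdan–Lusztig basis action on the Specht module `S^lam`:
`s_j · C_T = -C_T` if `j ∈ D(T)`, and
`s_j · C_T = C_T + ∑_{R, j ∈ D(R)} μ̄(T,R) C_R` otherwise. -/
def KLActionHyp (n : ℕ) (lam : List ℕ)
    (ρ : Representation ℂ (Perm (Fin n)) ({T : List (List ℕ) // IsSYT lam T} → ℂ)) : Prop :=
  ∀ (j : ℕ) (h1 : 1 ≤ j) (h2 : j < n) (T : {T : List (List ℕ) // IsSYT lam T}),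
    ρ (Equiv.swap ⟨j - 1, by omega⟩ ⟨j, h2⟩) (KLvec T) =
      if Descent T.1 j then -KLvec T
      else KLvec T + fun R => if Descent R.1 j then ((muBarTab n T.1 R.1 : ℤ) : ℂ) else 0

open Classical in
/-- Promotion as a map on the standard Young tableaux of shape `lam`. -/
noncomputable def prT {lam : List ℕ} (T : {T : List (List ℕ) // IsSYT lam T}) :
    {T : List (List ℕ) // IsSYT lam T} :=
  if h : IsSYT lam (promote T.1) then ⟨promote T.1, h⟩ else T

open Classical in
/-- Partial evacuation `ev_k` as a map on the standard Young tableaux of shape `lam`. -/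
noncomputable def evT {lam : List ℕ} (k : ℕ) (T : {T : List (List ℕ) // IsSYT lam T}) :
    {T : List (List ℕ) // IsSYT lam T} :=
  if h : IsSYT lam (evacOn T.1 k) then ⟨evacOn T.1 k, h⟩ else T

/-! ### Distinguished permutations -/

/-- The permutation of `Fin n` reversing the first `k` elements `0, …, k-1` (i.e. reversing
the values `1, …, k` in one-line notation) and fixing the rest. -/
def revFirst (n k : ℕ) (hk : k ≤ n) : Perm (Fin n) :=
  Function.Involutive.toPerm
    (fun i => if h : (i : ℕ) < k then ⟨k - 1 - (i : ℕ), by omega⟩ else i)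
    (by
      intro i
      by_cases h : (i : ℕ) < k
      · have h2 : k - 1 - (i : ℕ) < k := by omega
        simp only [h, dif_pos, h2]
        apply Fin.ext
        simp only []
        omega
      · simp [h])

/-- The embedding `S_{n-1} → S_n` (as the permutations fixing the last point). -/
noncomputable def permIncl (n : ℕ) : Perm (Fin (n - 1)) →* Perm (Fin n) :=
  Equiv.Perm.viaEmbeddingHom (Fin.castLEEmb (Nat.sub_le n 1))

/-! ### Parabolic subgroups, descending and separable permutations -/

/-- The simple transposition `s_{j+1} = (j, j+1)` (0-based `j`). -/
def simpleOf (n j : ℕ) : Perm (Fin n) :=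
  if h : j + 1 < n then Equiv.swap ⟨j, by omega⟩ ⟨j + 1, h⟩ else 1

/-- The parabolic (standard Young) subgroup of `S_n` generated by the simple transpositions
`s_{j+1}` for `j ∈ J` (0-based). -/
def parab (n : ℕ) (J : Finset ℕ) : Subgroup (Perm (Fin n)) :=
  Subgroup.closure {s | ∃ j ∈ J, s = simpleOf n j}

/-- `u` is the longest element of the parabolic subgroup `S_J`. -/
noncomputable def IsLongestOf (n : ℕ) (J : Finset ℕ) (u : Perm (Fin n)) : Prop :=
  u ∈ parab n J ∧ ∀ v ∈ parab n J, len v ≤ len u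

/-- A permutation is descending if it is of the form `w_{J_k} ⋯ w_{J_1}` for an increasing
chain `J_1 ⊂ ⋯ ⊂ J_k` of non-empty subsets of the simple transpositions, where `w_J` is the
longest element of the parabolic subgroup `S_J`. -/
noncomputable def Descending (n : ℕ) (w : Perm (Fin n)) : Prop :=
  ∃ (k : ℕ) (Js : Fin k → Finset ℕ) (ws : Fin k → Perm (Fin n)),
    (∀ i, (Js i).Nonempty ∧ Js i ⊆ Finset.range (n - 1)) ∧
    (∀ i j : Fin k, i < j → Js i ⊂ Js j) ∧
    (∀ i, IsLongestOf n (Js i) (ws i)) ∧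
    w = (List.ofFn ws).reverse.prod

/-- A permutation is separable if it avoids the patterns `2413` and `3142`. -/
def Separable (n : ℕ) (w : Perm (Fin n)) : Prop :=
  ¬ ∃ i1 i2 i3 i4 : Fin n, i1 < i2 ∧ i2 < i3 ∧ i3 < i4 ∧
    ((w i3 < w i1 ∧ w i1 < w i4 ∧ w i4 < w i2) ∨
     (w i2 < w i4 ∧ w i4 < w i1 ∧ w i1 < w i3))

/-! ### Column-superstandard tableaux -/

/-- The number of boxes in column `c` of the shape `lam`. -/
def colHeight (lam : List ℕ) (c : ℕ) : ℕ := (lam.filter (fun x => decide (c < x))).length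

/-- The column-superstandard tableau `CSS(lam)`: the values `1, …, n` are placed column by
column, left to right, each column top to bottom. -/
def colStd (lam : List ℕ) : List (List ℕ) :=
  (List.range lam.length).map (fun i =>
    (List.range (lam.getD i 0)).map (fun j =>
      ((List.range j).map (colHeight lam)).sum + i + 1))

/-- The column reading word of a tableau: columns left to right, each read bottom to top. -/
def colReading (T : List (List ℕ)) : List ℕ :=
  ((List.range (T.getD 0 []).length).map (fun j =>
    (((List.range T.length).filter (fun i => decide (j < (T.getD i []).length))).reverse).map
      (fun i => entryAt T i j))).flatten

/-- The tableau `CSS_i(lam)`: `n` is placed in the `i`-th removable box (in row `k`,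
1-based); the values `n-1, …, n-k+1` are placed at the ends of rows `k-1, …, 1`; the
remaining values `1, …, n-k` are placed in the remaining boxes column by column. -/
def cssI (lam : List ℕ) (i : ℕ) : List (List ℕ) :=
  let n := lam.sum
  let row0 := (removableRows lam).getD (i - 1) 0
  let lam' := (List.range lam.length).map
    (fun t => if t ≤ row0 then lam.getD t 0 - 1 else lam.getD t 0)
  let base := colStd lam'
  (List.range lam.length).map (fun t =>
    if t ≤ row0 then (base.getD t []) ++ [n - (row0 - t)] else base.getD t [])

theorem Equiv.Perm.apply_inv_self {α : Type*} (f : Perm α) (x : α) : f (f⁻¹ x) = x :=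
  f.apply_symm_apply x

theorem Equiv.Perm.inv_apply_self {α : Type*} (f : Perm α) (x : α) : f⁻¹ (f x) = x :=
  f.symm_apply_apply x

section Inversions
open Finset
variable {n : ℕ}

def invSet (w : Perm (Fin n)) : Finset (Fin n × Fin n) :=
  Finset.univ.filter (fun p => p.1 < p.2 ∧ w p.2 < w p.1)

def invNum (w : Perm (Fin n)) : ℕ := (invSet w).card

lemma coe_swap (t : ℕ) (h : t + 1 < n) (x : Fin n) :
    ((Equiv.swap ⟨t, by omega⟩ ⟨t+1, h⟩ x : Fin n) : ℕ) =
      if (x:ℕ) = t then t+1 else if (x:ℕ) = t+1 then t else (x:ℕ) := by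
  rcases x with ⟨x, hx⟩
  simp only [Equiv.swap_apply_def, Fin.ext_iff]
  split_ifs <;> simp_all <;> omega

lemma swap_lt {t : ℕ} (h : t + 1 < n) {x y : Fin n} (hxy : x < y)
    (hne : ¬((x:ℕ) = t ∧ (y:ℕ) = t+1)) :
    Equiv.swap (⟨t, by omega⟩ : Fin n) ⟨t+1, h⟩ x < Equiv.swap (⟨t, by omega⟩ : Fin n) ⟨t+1, h⟩ y := by
  have hx := coe_swap t h x
  have hy := coe_swap t h y
  rw [Fin.lt_def] at *
  split_ifs at hx hy <;> omega

lemma erase_card_eq (w : Perm (Fin n)) (t : ℕ) (h : t+1 < n) :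
    ((invSet (w * Equiv.swap ⟨t, by omega⟩ ⟨t+1,h⟩)).erase (⟨t, by omega⟩, ⟨t+1,h⟩)).card
    = ((invSet w).erase (⟨t, by omega⟩, ⟨t+1,h⟩)).card := by
  set a : Fin n := ⟨t, by omega⟩ with ha
  set b : Fin n := ⟨t+1, h⟩ with hb
  set s := Equiv.swap a b with hs
  have hmem : ∀ (v : Perm (Fin n)) (p : Fin n × Fin n),
      p ∈ (invSet v).erase (a, b) ↔ (p ≠ (a,b) ∧ p.1 < p.2 ∧ v p.2 < v p.1) := by
    intro v p
    simp [invSet, Finset.mem_erase, and_assoc]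
  have key : ∀ (v : Perm (Fin n)) (p : Fin n × Fin n), p ∈ (invSet (v * s)).erase (a, b) →
      (s p.1, s p.2) ∈ (invSet v).erase (a, b) := by
    intro v p hp
    rw [hmem] at hp ⊢
    obtain ⟨hne, hlt, hinv⟩ := hp
    have hne' : ¬((p.1:ℕ) = t ∧ (p.2:ℕ) = t+1) := by
      rintro ⟨h1, h2⟩
      apply hne
      have : p.1 = a := Fin.ext h1
      have : p.2 = b := Fin.ext h2
      simp_all [Prod.ext_iff]
    refine ⟨?_, swap_lt h hlt hne', ?_⟩
    · intro hq
      have h1 : s p.1 = a := congrArg Prod.fst hq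
      have h2 : s p.2 = b := congrArg Prod.snd hq
      have e1 : p.1 = s a := by rw [← h1]; simp [hs]
      have e2 : p.2 = s b := by rw [← h2]; simp [hs]
      rw [Equiv.swap_apply_left] at e1
      rw [Equiv.swap_apply_right] at e2
      rw [e1, e2] at hlt
      rw [Fin.lt_def, ha, hb] at hlt
      simp only [Fin.val_mk] at hlt
      omega
    · simpa [Equiv.Perm.mul_apply] using hinv
  have key2 : ∀ (p : Fin n × Fin n), p ∈ (invSet w).erase (a, b) →
      (s p.1, s p.2) ∈ (invSet (w * s)).erase (a, b) := by
    intro p hp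
    have : w = (w * s) * s := by rw [mul_assoc]; simp [hs]
    rw [this] at hp
    exact key (w * s) p hp
  apply Finset.card_bij' (fun p _ => (s p.1, s p.2)) (fun p _ => (s p.1, s p.2))
    (key w) key2
  · intro p hp
    simp [hs]
  · intro p hp
    simp [hs]

lemma invNum_mul_swap_ascent (w : Perm (Fin n)) (t : ℕ) (h : t+1 < n)
    (ha : w ⟨t, by omega⟩ < w ⟨t+1, h⟩) :
    invNum (w * Equiv.swap ⟨t, by omega⟩ ⟨t+1,h⟩) = invNum w + 1 := by
  set a : Fin n := ⟨t, by omega⟩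
  set b : Fin n := ⟨t+1, h⟩
  set s := Equiv.swap a b with hs
  have h1 : (a, b) ∈ invSet (w * s) := by
    simp only [invSet, Finset.mem_filter, Finset.mem_univ, true_and]
    constructor
    · exact Nat.lt_succ_self t
    · simpa [Equiv.Perm.mul_apply, hs] using ha
  have h2 : (a, b) ∉ invSet w := by
    simp only [invSet, Finset.mem_filter, Finset.mem_univ, true_and]
    rintro ⟨-, hc⟩
    exact absurd ha (not_lt.2 hc.le)
  have e1 := Finset.card_erase_add_one h1
  have e2 : (invSet w).erase (a, b) = invSet w := Finset.erase_eq_of_notMem h2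
  have := erase_card_eq w t h
  unfold invNum
  rw [← e1]
  rw [show ((invSet (w*s)).erase (a,b)).card = ((invSet w).erase (a,b)).card from this, e2]

lemma invNum_mul_swap_descent (w : Perm (Fin n)) (t : ℕ) (h : t+1 < n)
    (hd : w ⟨t+1, h⟩ < w ⟨t, by omega⟩) :
    invNum (w * Equiv.swap ⟨t, by omega⟩ ⟨t+1,h⟩) + 1 = invNum w := by
  set a : Fin n := ⟨t, by omega⟩
  set b : Fin n := ⟨t+1, h⟩
  set s := Equiv.swap a b with hs
  have h1 : (a, b) ∉ invSet (w * s) := by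
    simp only [invSet, Finset.mem_filter, Finset.mem_univ, true_and]
    rintro ⟨-, hc⟩
    simp only [Equiv.Perm.mul_apply, hs, Equiv.swap_apply_left, Equiv.swap_apply_right] at hc
    exact absurd hd (not_lt.2 hc.le)
  have h2 : (a, b) ∈ invSet w := by
    simp only [invSet, Finset.mem_filter, Finset.mem_univ, true_and]
    exact ⟨Nat.lt_succ_self t, hd⟩
  have e1 := Finset.card_erase_add_one h2
  have e2 : (invSet (w * s)).erase (a, b) = invSet (w * s) := Finset.erase_eq_of_notMem h1
  have := erase_card_eq w t h
  unfold invNum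
  rw [← e1, ← this, e2]

lemma invNum_one : invNum (1 : Perm (Fin n)) = 0 := by
  unfold invNum invSet
  rw [Finset.card_eq_zero]
  ext p
  simp only [Finset.mem_filter, Finset.mem_univ, true_and, Finset.notMem_empty, iff_false]
  rintro ⟨h1, h2⟩
  simp only [Equiv.Perm.one_apply] at h2
  exact absurd h1 (not_lt.2 h2.le)

lemma strictMono_of_adj {f : Fin n → Fin n}
    (hf : ∀ (t : ℕ) (h : t+1 < n), f ⟨t, by omega⟩ < f ⟨t+1, h⟩) : StrictMono f := by
  have key : ∀ (k : ℕ) (i j : Fin n), (j:ℕ) = (i:ℕ) + k + 1 → f i < f j := by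
    intro k
    induction k with
    | zero =>
      intro i j hij
      have h1 : (i:ℕ) + 1 < n := by omega
      have hlt : f ⟨(i:ℕ), by omega⟩ < f ⟨(i:ℕ)+1, h1⟩ := hf i h1
      have hi : (⟨(i:ℕ), by omega⟩ : Fin n) = i := Fin.ext rfl
      have hj : (⟨(i:ℕ)+1, h1⟩ : Fin n) = j := Fin.ext (show (i:ℕ)+1 = (j:ℕ) by omega)
      rwa [hi, hj] at hlt
    | succ k ih =>
      intro i j hij
      have h1 : (i:ℕ) + k + 1 < n := by omega
      have l1 : f i < f ⟨(i:ℕ)+k+1, h1⟩ := ih i _ rfl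
      have l2 : f ⟨(i:ℕ)+k+1, h1⟩ < f j := by
        have h2 : (i:ℕ) + k + 1 + 1 < n := by omega
        have hlt := hf ((i:ℕ)+k+1) h2
        have hj : (⟨(i:ℕ)+k+1+1, h2⟩ : Fin n) = j := Fin.ext (show (i:ℕ)+k+1+1 = (j:ℕ) by omega)
        have hi' : (⟨(i:ℕ)+k+1, by omega⟩ : Fin n) = ⟨(i:ℕ)+k+1, h1⟩ := Fin.ext rfl
        rwa [hj, hi'] at hlt
      exact l1.trans l2
  intro i j hij
  exact key ((j:ℕ) - (i:ℕ) - 1) i j (by rw [Fin.lt_def] at hij; omega)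

lemma eq_one_of_strictMono (w : Perm (Fin n)) (hw : StrictMono (w : Fin n → Fin n)) : w = 1 := by
  have h1 : ∀ (v : Perm (Fin n)), StrictMono (v : Fin n → Fin n) → ∀ i : Fin n, (i:ℕ) ≤ v i := by
    intro v hv
    have : ∀ (m : ℕ) (i : Fin n), (i:ℕ) = m → m ≤ v i := by
      intro m
      induction m with
      | zero => intro i _; exact Nat.zero_le _
      | succ m ih =>
        intro i hi
        have hm : m < n := by omega
        have hlt : v ⟨m, hm⟩ < v i := hv (by rw [Fin.lt_def]; show m < (i:ℕ); omega)
        have hle := ih ⟨m, hm⟩ rfl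
        rw [Fin.lt_def] at hlt
        omega
    intro i; exact this (i:ℕ) i rfl
  have hinv : StrictMono ((w⁻¹ : Perm (Fin n)) : Fin n → Fin n) := by
    intro x y hxy
    rcases lt_trichotomy (w⁻¹ x) (w⁻¹ y) with h | h | h
    · exact h
    · exact absurd (w⁻¹.injective h) (by rintro rfl; exact lt_irrefl _ hxy)
    · have := hw h
      simp only [Equiv.Perm.apply_inv_self] at this
      exact absurd hxy (not_lt.2 this.le)
  ext i
  have a1 := h1 w hw i
  have a2 := h1 w⁻¹ hinv (w i)
  simp only [Equiv.Perm.inv_apply_self] at a2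
  simp only [Equiv.Perm.coe_one, id_eq]
  omega

lemma exists_descent (w : Perm (Fin n)) (hw : w ≠ 1) :
    ∃ (t : ℕ) (h : t + 1 < n), w ⟨t+1, h⟩ < w ⟨t, by omega⟩ := by
  by_contra hc
  push_neg at hc
  apply hw
  apply eq_one_of_strictMono
  apply strictMono_of_adj
  intro t h
  rcases lt_trichotomy (w ⟨t, by omega⟩) (w ⟨t+1, h⟩) with h' | h' | h'
  · exact h'
  · exact absurd (w.injective h') (by simp [Fin.ext_iff])
  · exact absurd h' (not_lt.2 (hc t h))

lemma invNum_eq_zero_iff (w : Perm (Fin n)) : invNum w = 0 ↔ w = 1 := by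
  constructor
  · intro h
    rcases eq_or_ne w 1 with rfl | hw
    · rfl
    · obtain ⟨t, ht, hd⟩ := exists_descent w hw
      exfalso
      have : (⟨t, by omega⟩, (⟨t+1, ht⟩ : Fin n)) ∈ invSet w := by
        simp only [invSet, Finset.mem_filter, Finset.mem_univ, true_and]
        exact ⟨by simp [Fin.lt_def], hd⟩
      have := Finset.card_pos.2 ⟨_, this⟩
      unfold invNum at h
      omega
  · rintro rfl; exact invNum_one

lemma exists_word : ∀ (k : ℕ) (w : Perm (Fin n)), invNum w = k →
    ∃ L : List (Perm (Fin n)), L.length = k ∧ (∀ s ∈ L, IsSimpleT s) ∧ L.prod = w := by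
  intro k
  induction k using Nat.strong_induction_on with
  | _ k ih =>
    intro w hw
    rcases eq_or_ne w 1 with rfl | hne
    · exact ⟨[], by simp [← hw, invNum_one], by simp, by simp⟩
    · obtain ⟨t, ht, hd⟩ := exists_descent w hne
      have htn : t < n := by omega
      set s := Equiv.swap (⟨t, htn⟩ : Fin n) ⟨t+1, ht⟩ with hs
      have hrec : invNum (w * s) + 1 = invNum w := invNum_mul_swap_descent w t ht hd
      have hk1 : invNum (w * s) = k - 1 := by omega
      have hk2 : 1 ≤ k := by omega
      obtain ⟨L, hL1, hL2, hL3⟩ := ih (k-1) (by omega) (w * s) hk1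
      refine ⟨L ++ [s], by simp [hL1]; omega, ?_, ?_⟩
      · intro x hx
        rcases List.mem_append.1 hx with h | h
        · exact hL2 x h
        · simp only [List.mem_singleton] at h
          exact h ▸ ⟨t, ht, rfl⟩
      · rw [List.prod_append, List.prod_singleton, hL3, mul_assoc]
        simp [hs]

lemma invNum_prod_le (L : List (Perm (Fin n))) (hL : ∀ s ∈ L, IsSimpleT s) :
    invNum L.prod ≤ L.length := by
  induction L using List.reverseRecOn with
  | nil => simp [invNum_one]
  | append_singleton L s ih =>
    obtain ⟨t, ht, rfl⟩ := hL s (by simp)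
    rw [List.prod_append, List.prod_singleton]
    have ihL := ih (fun x hx => hL x (by simp [hx]))
    rcases lt_trichotomy (L.prod ⟨t, Nat.lt_of_succ_lt ht⟩) (L.prod ⟨t+1, ht⟩) with h' | h' | h'
    · have hasc : invNum (L.prod * Equiv.swap (⟨t, Nat.lt_of_succ_lt ht⟩ : Fin n) ⟨t+1, ht⟩)
          = invNum L.prod + 1 := invNum_mul_swap_ascent L.prod t ht h'
      rw [hasc]
      simp only [List.length_append, List.length_singleton]
      omega
    · exact absurd (L.prod.injective h') (by simp [Fin.ext_iff])
    · have hdes : invNum (L.prod * Equiv.swap (⟨t, Nat.lt_of_succ_lt ht⟩ : Fin n) ⟨t+1, ht⟩) + 1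
          = invNum L.prod := invNum_mul_swap_descent L.prod t ht h'
      simp only [List.length_append, List.length_singleton]
      omega

lemma len_eq_invNum (w : Perm (Fin n)) : len w = invNum w := by
  obtain ⟨L, hL1, hL2, hL3⟩ := exists_word (invNum w) w rfl
  apply le_antisymm
  · exact Nat.sInf_le ⟨L, hL1, hL2, hL3⟩
  · have hne : {k | ∃ L : List (Perm (Fin n)), L.length = k ∧ (∀ s ∈ L, IsSimpleT s) ∧ L.prod = w}.Nonempty :=
      ⟨invNum w, L, hL1, hL2, hL3⟩
    apply le_csInf hne
    rintro k ⟨M, rfl, hM, hMp⟩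
    calc invNum w = invNum M.prod := by rw [hMp]
    _ ≤ M.length := invNum_prod_le M hM

end Inversions
section Blocks
open Finset
variable {n : ℕ} {J : Finset ℕ}

/-- `a` and `b` are in the same block of `J`. -/
def SB (J : Finset ℕ) (a b : ℕ) : Prop := Finset.Ico (min a b) (max a b) ⊆ J

instance SB_dec (J : Finset ℕ) (a b : ℕ) : Decidable (SB J a b) :=
  inferInstanceAs (Decidable (Finset.Ico (min a b) (max a b) ⊆ J))

lemma SB_def {a b : ℕ} : SB J a b ↔ ∀ t, min a b ≤ t → t < max a b → t ∈ J := by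
  simp [SB, Finset.subset_iff, Finset.mem_Ico, and_imp]

lemma SB_refl (a : ℕ) : SB J a a := by rw [SB_def]; intro t h1 h2; omega

lemma SB_symm {a b : ℕ} (h : SB J a b) : SB J b a := by
  rw [SB_def] at h ⊢
  intro t h1 h2
  exact h t (by omega) (by omega)

lemma SB_trans {a b c : ℕ} (h1 : SB J a b) (h2 : SB J b c) : SB J a c := by
  rw [SB_def] at h1 h2 ⊢
  intro t ht1 ht2
  rcases (by omega : (min a b ≤ t ∧ t < max a b) ∨ (min b c ≤ t ∧ t < max b c)) with h | h
  · exact h1 t h.1 h.2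
  · exact h2 t h.1 h.2

/-- The least element of the block of `i`. -/
noncomputable def loB (J : Finset ℕ) (i : ℕ) : ℕ :=
  Nat.find (⟨i, by simp⟩ : ∃ a, Finset.Ico a i ⊆ J)

/-- The greatest element of the block of `i` (within `[0, n-1]`). -/
noncomputable def hiB (n : ℕ) (J : Finset ℕ) (i : ℕ) : ℕ :=
  Nat.findGreatest (fun b => b < n ∧ Finset.Ico i b ⊆ J) (n - 1)

lemma loB_le (i : ℕ) : loB J i ≤ i := Nat.find_min' _ (by simp)

lemma loB_prop (i : ℕ) : ∀ t, loB J i ≤ t → t < i → t ∈ J := by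
  have := Nat.find_spec (⟨i, by simp⟩ : ∃ a, Finset.Ico a i ⊆ J)
  intro t h1 h2
  exact this (Finset.mem_Ico.2 ⟨h1, h2⟩)

lemma loB_min {a i : ℕ} (h : ∀ t, a ≤ t → t < i → t ∈ J) : loB J i ≤ a :=
  Nat.find_min' _ (fun t ht => h t (Finset.mem_Ico.1 ht).1 (Finset.mem_Ico.1 ht).2)

lemma hiB_ge (i : ℕ) (hi : i < n) : i ≤ hiB n J i := by
  exact Nat.le_findGreatest (P := fun b => b < n ∧ Finset.Ico i b ⊆ J) (by omega) ⟨hi, by simp⟩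

lemma hiB_spec (i : ℕ) (hi : i < n) : hiB n J i < n ∧ ∀ t, i ≤ t → t < hiB n J i → t ∈ J := by
  have h := Nat.findGreatest_spec (P := fun b => b < n ∧ Finset.Ico i b ⊆ J)
    (m := i) (n := n - 1) (by omega) ⟨hi, by simp⟩
  exact ⟨h.1, fun t h1 h2 => h.2 (Finset.mem_Ico.2 ⟨h1, h2⟩)⟩

lemma hiB_max {i b : ℕ} (hb : b < n) (h : ∀ t, i ≤ t → t < b → t ∈ J) : b ≤ hiB n J i := by
  exact Nat.le_findGreatest (P := fun b => b < n ∧ Finset.Ico i b ⊆ J) (by omega)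
    ⟨hb, fun t ht => h t (Finset.mem_Ico.1 ht).1 (Finset.mem_Ico.1 ht).2⟩

lemma SB_iff {i j : ℕ} (hi : i < n) (hj : j < n) :
    SB J i j ↔ (loB J i ≤ j ∧ j ≤ hiB n J i) := by
  rw [SB_def]
  constructor
  · intro h
    rcases le_or_gt i j with hij | hij
    · refine ⟨(loB_le i).trans hij, hiB_max hj ?_⟩
      intro t h1 h2
      rcases le_or_gt j t with h3 | h3
      · exact (hiB_spec i hi).2 t h1 (by omega)
      · exact h t (by omega) (by omega)
    · refine ⟨loB_min (fun t h1 h2 => ?_), le_of_lt (lt_of_lt_of_le hij (hiB_ge i hi))⟩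
      rcases le_or_gt i t with h3 | h3
      · omega
      · exact h t (by omega) (by omega)
  · rintro ⟨h1, h2⟩ t ht1 ht2
    rcases le_or_gt i t with h3 | h3
    · exact (hiB_spec i hi).2 t h3 (by omega)
    · exact loB_prop i t (by omega) (by omega)

lemma class_mono {i j : ℕ} (hi : i < n) (hj : j < n) (h : SB J i j) :
    loB J j ≤ loB J i ∧ hiB n J i ≤ hiB n J j := by
  rw [SB_def] at h
  constructor
  · apply loB_min
    intro t h1 h2
    rcases le_or_gt i t with h3 | h3
    · exact h t (by omega) (by omega)
    · exact loB_prop i t h1 h3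
  · apply hiB_max (hiB_spec i hi).1
    intro t h1 h2
    rcases le_or_gt i t with h3 | h3
    · exact (hiB_spec i hi).2 t h3 h2
    · exact h t (by omega) (by omega)

lemma class_eq {i j : ℕ} (hi : i < n) (hj : j < n) (h : SB J i j) :
    loB J j = loB J i ∧ hiB n J j = hiB n J i := by
  have h1 := class_mono hi hj h
  have h2 := class_mono hj hi (SB_symm h)
  omega

lemma blockRev_involutive :
    Function.Involutive (fun i : Fin n =>
      (⟨loB J i + hiB n J i - i, by
          have := loB_le (J := J) (i : ℕ)
          have := (hiB_spec (J := J) (i:ℕ) i.2).1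
          omega⟩ : Fin n)) := by
  intro i
  have hle := loB_le (J := J) (i : ℕ)
  have hsp := hiB_spec (J := J) (i:ℕ) i.2
  have hge := hiB_ge (J := J) (i:ℕ) i.2
  have hj : (loB J i + hiB n J i - i) < n := by omega
  have hsb : SB J i (loB J i + hiB n J i - i) := by
    rw [SB_iff i.2 hj]
    omega
  have hclass := class_eq i.2 hj hsb
  apply Fin.ext
  show loB J (loB J i + hiB n J i - i) + hiB n J (loB J i + hiB n J i - i)
      - (loB J i + hiB n J i - i) = (i : ℕ)
  omega

/-- The longest element of the standard parabolic subgroup: reversal of every block. -/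
noncomputable def blockRev (n : ℕ) (J : Finset ℕ) : Perm (Fin n) :=
  Function.Involutive.toPerm _ (blockRev_involutive (J := J))

lemma blockRev_coe (i : Fin n) : (blockRev n J i : ℕ) = loB J i + hiB n J i - i := rfl

/-- The subgroup of block-preserving permutations. -/
def BPgrp (n : ℕ) (J : Finset ℕ) : Subgroup (Perm (Fin n)) where
  carrier := {w | ∀ i : Fin n, SB J i (w i)}
  one_mem' := fun i => SB_refl _
  mul_mem' := by
    intro a b ha hb i
    exact SB_trans (hb i) (ha (b i))
  inv_mem' := by
    intro a ha i
    have := ha (a⁻¹ i)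
    simp only [Equiv.Perm.apply_inv_self] at this
    exact SB_symm this

lemma swap_mem_BP {t : ℕ} (ht : t + 1 < n) (htJ : t ∈ J) :
    Equiv.swap (⟨t, by omega⟩ : Fin n) ⟨t+1, ht⟩ ∈ BPgrp n J := by
  intro i
  have hcoe := coe_swap t ht i
  rw [SB_def]
  intro u h1 h2
  split_ifs at hcoe
  · have : u = t := by omega
    rwa [this]
  · have : u = t := by omega
    rwa [this]
  · exfalso; omega

lemma parab_le_BP : parab n J ≤ BPgrp n J := by
  apply Subgroup.closure_le (BPgrp n J) |>.2
  rintro s ⟨j, hj, rfl⟩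
  unfold simpleOf
  split_ifs with h
  · exact swap_mem_BP h hj
  · exact (BPgrp n J).one_mem

lemma simpleOf_mem_parab {t : ℕ} (htJ : t ∈ J) : simpleOf n t ∈ parab n J :=
  Subgroup.subset_closure ⟨t, htJ, rfl⟩

lemma swap_eq_simpleOf {t : ℕ} (ht : t + 1 < n) :
    Equiv.swap (⟨t, by omega⟩ : Fin n) ⟨t+1, ht⟩ = simpleOf n t := by
  unfold simpleOf
  rw [dif_pos ht]

lemma BP_le_parab : BPgrp n J ≤ parab n J := by
  intro w hw
  -- strong induction on invNum
  have main : ∀ (k : ℕ) (v : Perm (Fin n)), invNum v = k → v ∈ BPgrp n J → v ∈ parab n J := by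
    intro k
    induction k using Nat.strong_induction_on with
    | _ k ih =>
      intro v hk hv
      rcases eq_or_ne v 1 with rfl | hne
      · exact (parab n J).one_mem
      · obtain ⟨t, ht, hd⟩ := exists_descent v hne
        have htn : t < n := by omega
        -- t ∈ J
        have htJ : t ∈ J := by
          by_contra htJ
          have h1 := hv ⟨t, htn⟩
          have h2 := hv ⟨t+1, ht⟩
          rw [SB_def] at h1 h2
          rw [Fin.lt_def] at hd
          simp only [Fin.val_mk] at h1 h2 hd
          have e1 : (v ⟨t, htn⟩ : ℕ) ≤ t := by
            by_contra hc
            exact htJ (h1 t (by omega) (by omega))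
          have e2 : t + 1 ≤ (v ⟨t+1, ht⟩ : ℕ) := by
            by_contra hc
            exact htJ (h2 t (by omega) (by omega))
          omega
        set s := Equiv.swap (⟨t, htn⟩ : Fin n) ⟨t+1, ht⟩ with hs
        have hvs : v * s ∈ BPgrp n J := (BPgrp n J).mul_mem hv (swap_mem_BP ht htJ)
        have hrec : invNum (v * s) + 1 = invNum v := invNum_mul_swap_descent v t ht hd
        have := ih (invNum (v * s)) (by omega) (v * s) rfl hvs
        have hsp : s ∈ parab n J := by
          rw [hs, swap_eq_simpleOf ht]
          exact simpleOf_mem_parab htJ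
        have : (v * s) * s ∈ parab n J := (parab n J).mul_mem this hsp
        rwa [mul_assoc, hs, Equiv.swap_mul_self, mul_one] at this
  exact main (invNum w) w rfl hw

lemma blockRev_mem_BP : blockRev n J ∈ BPgrp n J := by
  intro i
  have hle := loB_le (J := J) (i : ℕ)
  have hsp := hiB_spec (J := J) (i:ℕ) i.2
  have hge := hiB_ge (J := J) (i:ℕ) i.2
  rw [SB_iff i.2 (blockRev n J i).2, blockRev_coe]
  omega

lemma cross_order {w : Perm (Fin n)} (hw : w ∈ BPgrp n J) {i j : Fin n}
    (hij : i < j) (hsb : ¬ SB J i j) : w i < w j := by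
  have h1 := hw i
  have h2 := hw j
  rw [SB_def] at h1 h2
  rw [Fin.lt_def] at hij ⊢
  -- find t in [i, j) not in J
  have : ∃ t, (i:ℕ) ≤ t ∧ t < (j:ℕ) ∧ t ∉ J := by
    by_contra hc
    push_neg at hc
    apply hsb
    rw [SB_def]
    intro t ht1 ht2
    exact hc t (by omega) (by omega)
  obtain ⟨t, ht1, ht2, htJ⟩ := this
  have e1 : (w i : ℕ) ≤ t := by
    by_contra hc
    exact htJ (h1 t (by omega) (by omega))
  have e2 : t < (w j : ℕ) := by
    by_contra hc
    exact htJ (h2 t (by omega) (by omega))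
  omega

lemma invSet_blockRev :
    invSet (blockRev n J) = Finset.univ.filter (fun p : Fin n × Fin n => p.1 < p.2 ∧ SB J p.1 p.2) := by
  ext p
  simp only [invSet, Finset.mem_filter, Finset.mem_univ, true_and]
  constructor
  · rintro ⟨h1, h2⟩
    refine ⟨h1, ?_⟩
    by_contra hc
    exact absurd h2 (not_lt.2 (cross_order blockRev_mem_BP h1 hc).le)
  · rintro ⟨h1, h2⟩
    refine ⟨h1, ?_⟩
    have := class_eq (J := J) p.1.2 p.2.2 h2
    rw [Fin.lt_def] at h1 ⊢
    rw [blockRev_coe, blockRev_coe]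
    have c1 := loB_le (J := J) (p.1 : ℕ)
    have c2 := hiB_ge (J := J) (p.2:ℕ) p.2.2
    omega

lemma invNum_le_blockRev {w : Perm (Fin n)} (hw : w ∈ BPgrp n J) :
    invNum w ≤ invNum (blockRev n J) := by
  unfold invNum
  apply Finset.card_le_card
  rw [invSet_blockRev]
  intro p hp
  simp only [invSet, Finset.mem_filter, Finset.mem_univ, true_and] at hp ⊢
  refine ⟨hp.1, ?_⟩
  by_contra hc
  exact absurd hp.2 (not_lt.2 (cross_order hw hp.1 hc).le)

lemma isLongestOf_blockRev : IsLongestOf n J (blockRev n J) := by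
  constructor
  · exact BP_le_parab blockRev_mem_BP
  · intro v hv
    rw [len_eq_invNum, len_eq_invNum]
    exact invNum_le_blockRev (parab_le_BP hv)

lemma isLongestOf_unique {u : Perm (Fin n)} (h : IsLongestOf n J u) : u = blockRev n J := by
  obtain ⟨hu, hmax⟩ := h
  have hBP := parab_le_BP hu
  have hdesc : ∀ (t : ℕ) (ht : t + 1 < n), t ∈ J → u ⟨t+1, ht⟩ < u ⟨t, by omega⟩ := by
    intro t ht htJ
    have htn : t < n := by omega
    set s := Equiv.swap (⟨t, htn⟩ : Fin n) ⟨t+1, ht⟩ with hs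
    rcases lt_trichotomy (u ⟨t, htn⟩) (u ⟨t+1, ht⟩) with h' | h' | h'
    · exfalso
      have hmem : u * s ∈ parab n J := by
        apply (parab n J).mul_mem hu
        rw [hs, swap_eq_simpleOf ht]
        exact simpleOf_mem_parab htJ
      have hml := hmax _ hmem
      rw [len_eq_invNum, len_eq_invNum] at hml
      have hasc : invNum (u * s) = invNum u + 1 := invNum_mul_swap_ascent u t ht h'
      omega
    · exact absurd (u.injective h') (by simp [Fin.ext_iff])
    · exact h'
  have hg : ∃ g : ℕ → ℕ, ∀ (t : ℕ) (h : t < n), g t = (u ⟨t, h⟩ : ℕ) :=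
    ⟨fun t => if h : t < n then (u ⟨t, h⟩ : ℕ) else 0, fun t h => dif_pos h⟩
  obtain ⟨g, gval⟩ := hg
  have gdesc : ∀ t, t + 1 < n → t ∈ J → g (t+1) < g t := by
    intro t ht htJ
    rw [gval (t+1) ht, gval t (by omega)]
    have hlt : (u ⟨t+1, ht⟩ : ℕ) < (u ⟨t, by omega⟩ : ℕ) := by
      have := hdesc t ht htJ
      rwa [Fin.lt_def] at this
    exact hlt
  have chain : ∀ (k c : ℕ), c + k < n → (∀ t, c ≤ t → t < c + k → t ∈ J) →
      g (c + k) + k ≤ g c := by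
    intro k
    induction k with
    | zero => intro c _ _; simp
    | succ k ihk =>
      intro c hc hJ
      have h1 := gdesc (c + k) (by omega) (hJ (c+k) (by omega) (by omega))
      have h2 := ihk c (by omega) (fun t a b => hJ t a (by omega))
      rw [show c + (k+1) = c + k + 1 by omega]
      omega
  have main : ∀ i : Fin n, (u i : ℕ) = loB J (i:ℕ) + hiB n J (i:ℕ) - (i:ℕ) := by
    intro i
    have hle := loB_le (J := J) (i : ℕ)
    have hsp := hiB_spec (J := J) (i:ℕ) i.2
    have hge := hiB_ge (J := J) (i:ℕ) i.2
    have hcd : ∀ t, loB J (i:ℕ) ≤ t → t < hiB n J (i:ℕ) → t ∈ J := by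
      intro t h1 h2
      rcases le_or_gt (i:ℕ) t with h3 | h3
      · exact hsp.2 t h3 h2
      · exact loB_prop (J := J) (i:ℕ) t h1 h3
    have hin : ∀ t, loB J (i:ℕ) ≤ t → t ≤ hiB n J (i:ℕ) →
        loB J (i:ℕ) ≤ g t ∧ g t ≤ hiB n J (i:ℕ) := by
      intro t h1 h2
      have htn : t < n := by omega
      have hsb : SB J (i:ℕ) t := by rw [SB_iff i.2 htn]; omega
      have hclass := class_eq i.2 htn hsb
      have hsb2 : SB J t ((u ⟨t, htn⟩ : Fin n) : ℕ) := hBP ⟨t, htn⟩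
      rw [SB_iff htn (u ⟨t, htn⟩).2] at hsb2
      rw [gval t htn]
      omega
    have hlow := chain (hiB n J (i:ℕ) - (i:ℕ)) (i:ℕ) (by omega)
      (fun t a b => hcd t (by omega) (by omega))
    rw [show (i:ℕ) + (hiB n J (i:ℕ) - (i:ℕ)) = hiB n J (i:ℕ) by omega] at hlow
    have hhigh := chain ((i:ℕ) - loB J (i:ℕ)) (loB J (i:ℕ)) (by omega)
      (fun t a b => hcd t (by omega) (by omega))
    rw [show loB J (i:ℕ) + ((i:ℕ) - loB J (i:ℕ)) = (i:ℕ) by omega] at hhigh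
    have b1 := hin (hiB n J (i:ℕ)) (by omega) le_rfl
    have b2 := hin (loB J (i:ℕ)) le_rfl (by omega)
    have gi : g ((i:ℕ)) = (u i : ℕ) := gval (i:ℕ) i.2
    omega
  apply Equiv.ext
  intro i
  apply Fin.ext
  rw [blockRev_coe]
  exact main i

lemma isLongestOf_iff {u : Perm (Fin n)} : IsLongestOf n J u ↔ u = blockRev n J := by
  constructor
  · exact isLongestOf_unique
  · rintro rfl; exact isLongestOf_blockRev

end Blocks
section Forward
open Finset
variable {n : ℕ} {J : Finset ℕ}

lemma BPgrp_mono {K : Finset ℕ} (hKJ : K ⊆ J) : BPgrp n K ≤ BPgrp n J := by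
  intro w hw i
  exact (hw i).trans hKJ

lemma separable_one : Separable n 1 := by
  rintro ⟨i1, i2, i3, i4, h12, h23, h34, hc⟩
  rw [Fin.lt_def] at h12 h23 h34
  rcases hc with ⟨a, b, c⟩ | ⟨a, b, c⟩ <;>
    (simp only [Equiv.Perm.one_apply, Fin.lt_def] at a b c; omega)

lemma descending_one : Descending n 1 := by
  refine ⟨0, Fin.elim0, Fin.elim0, fun i => i.elim0, fun i => i.elim0, fun i => i.elim0, ?_⟩
  simp

lemma separable_prod_chain (L : List (Finset ℕ))
    (hpw : L.Pairwise (fun A B => B ⊆ A)) :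
    Separable n ((L.map (blockRev n)).prod) := by
  induction L with
  | nil => simpa using separable_one
  | cons J rest ih =>
    rw [List.pairwise_cons] at hpw
    obtain ⟨hhead, htail⟩ := hpw
    have hsep' := ih htail
    rw [List.map_cons, List.prod_cons]
    set w' := ((rest.map (blockRev n)).prod) with hw'
    set w := blockRev n J * w' with hw
    have hw'BP : w' ∈ BPgrp n J := by
      apply Subgroup.list_prod_mem
      intro x hx
      rw [List.mem_map] at hx
      obtain ⟨K, hK, rfl⟩ := hx
      exact BPgrp_mono (hhead K hK) blockRev_mem_BP
    have hwBP : w ∈ BPgrp n J := (BPgrp n J).mul_mem blockRev_mem_BP hw'BP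
    rintro ⟨i1, i2, i3, i4, h12, h23, h34, hc⟩
    have key : ∀ (p q : Fin n), p < q → w q < w p → SB J (p:ℕ) (q:ℕ) := by
      intro p q hpq hv
      by_contra hsb
      exact absurd hv (not_lt.2 (cross_order hwBP hpq hsb).le)
    have p12 : (i1:ℕ) < i2 := h12
    have p23 : (i2:ℕ) < i3 := h23
    have p34 : (i3:ℕ) < i4 := h34
    have hSB14 : SB J (i1:ℕ) (i4:ℕ) := by
      rcases hc with ⟨a, b, c⟩ | ⟨a, b, c⟩
      · have s13 := key i1 i3 (h12.trans h23) a
        have s24 := key i2 i4 (h23.trans h34) c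
        rw [SB_def] at s13 s24 ⊢
        intro t ht1 ht2
        rcases (by omega : ((i1:ℕ) ⊓ (i3:ℕ) ≤ t ∧ t < (i1:ℕ) ⊔ (i3:ℕ)) ∨
            ((i2:ℕ) ⊓ (i4:ℕ) ≤ t ∧ t < (i2:ℕ) ⊔ (i4:ℕ))) with h | h
        · exact s13 t h.1 h.2
        · exact s24 t h.1 h.2
      · exact key i1 i4 (h12.trans (h23.trans h34)) b
    have hSB1 : ∀ q : Fin n, (i1:ℕ) ≤ q → (q:ℕ) ≤ (i4:ℕ) → SB J (i1:ℕ) (q:ℕ) := by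
      intro q hq1 hq2
      rw [SB_def] at hSB14 ⊢
      intro t ht1 ht2
      exact hSB14 t (by omega) (by omega)
    have hval : ∀ q : Fin n, (i1:ℕ) ≤ q → (q:ℕ) ≤ i4 →
        loB J (i1:ℕ) ≤ (w' q : ℕ) ∧ (w' q : ℕ) ≤ hiB n J (i1:ℕ) ∧
        (w q : ℕ) = loB J (i1:ℕ) + hiB n J (i1:ℕ) - (w' q : ℕ) := by
      intro q hq1 hq2
      have hsb1 : SB J (i1:ℕ) (q:ℕ) := hSB1 q hq1 hq2
      have hsb2 : SB J (q:ℕ) ((w' q : Fin n) : ℕ) := hw'BP q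
      have hsb3 : SB J (i1:ℕ) ((w' q : Fin n) : ℕ) := SB_trans hsb1 hsb2
      have hcls := class_eq i1.2 (w' q).2 hsb3
      have hmem : loB J (i1:ℕ) ≤ ((w' q : Fin n):ℕ) ∧ ((w' q : Fin n):ℕ) ≤ hiB n J (i1:ℕ) := by
        rw [SB_iff i1.2 (w' q).2] at hsb3
        exact hsb3
      refine ⟨hmem.1, hmem.2, ?_⟩
      have happ : w q = blockRev n J (w' q) := by rw [hw]; rfl
      rw [happ, blockRev_coe, hcls.1, hcls.2]
    have b1 := hval i1 le_rfl (by omega)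
    have b2 := hval i2 (by omega) (by omega)
    have b3 := hval i3 (by omega) (by omega)
    have b4 := hval i4 (by omega) le_rfl
    apply hsep'
    refine ⟨i1, i2, i3, i4, h12, h23, h34, ?_⟩
    rcases hc with ⟨a, b, c⟩ | ⟨a, b, c⟩
    · refine Or.inr ?_
      rw [Fin.lt_def] at a b c ⊢
      refine ⟨?_, by rw [Fin.lt_def]; omega⟩
      · omega
      -- remaining component
    · refine Or.inl ?_
      rw [Fin.lt_def] at a b c ⊢
      refine ⟨?_, by rw [Fin.lt_def]; omega⟩
      · omega

lemma descending_elim {w : Perm (Fin n)} (h : Descending n w) :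
    ∃ L : List (Finset ℕ),
      (∀ J ∈ L, J.Nonempty ∧ J ⊆ Finset.range (n-1)) ∧
      L.Pairwise (fun A B => B ⊂ A) ∧ w = (L.map (blockRev n)).prod := by
  obtain ⟨k, Js, ws, hprops, hchain, hlong, hprod⟩ := h
  refine ⟨(List.ofFn Js).reverse, ?_, ?_, ?_⟩
  · intro K hK
    rw [List.mem_reverse, List.mem_ofFn] at hK
    obtain ⟨i, rfl⟩ := hK
    exact hprops i
  · rw [List.pairwise_reverse, List.pairwise_ofFn]
    intro i j hij
    exact hchain i j hij
  · have hws : ws = fun i => blockRev n (Js i) := funext fun i => isLongestOf_unique (hlong i)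
    rw [hprod, hws, List.map_reverse, List.map_ofFn]
    rfl

lemma separable_of_descending {w : Perm (Fin n)} (h : Descending n w) : Separable n w := by
  obtain ⟨L, _, hpw, rfl⟩ := descending_elim h
  apply separable_prod_chain
  exact hpw.imp (fun h' => h'.subset)

lemma descending_intro {w : Perm (Fin n)} (L : List (Finset ℕ))
    (hne : ∀ J ∈ L, J.Nonempty ∧ J ⊆ Finset.range (n-1))
    (hchain : L.Pairwise (fun A B => B ⊂ A))
    (hprod : w = (L.map (blockRev n)).prod) : Descending n w := by
  set k := L.length with hk
  have hget : ∀ i : Fin k, k - 1 - (i:ℕ) < L.length := by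
    intro i
    have := i.2
    omega
  refine ⟨k, fun i => L.get ⟨k - 1 - (i:ℕ), hget i⟩,
    fun i => blockRev n (L.get ⟨k - 1 - (i:ℕ), hget i⟩), ?_, ?_, ?_, ?_⟩
  · intro i
    exact hne _ (L.get_mem _)
  · intro i j hij
    rw [List.pairwise_iff_get] at hchain
    apply hchain ⟨k - 1 - (j:ℕ), hget j⟩ ⟨k - 1 - (i:ℕ), hget i⟩
    rw [Fin.lt_def] at hij ⊢
    show k - 1 - (j:ℕ) < k - 1 - (i:ℕ)
    have hjk : (j : ℕ) < k := j.2
    omega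
  · intro i
    exact isLongestOf_blockRev
  · rw [hprod]
    congr 1
    apply List.ext_getElem
    · simp [hk]
    · intro i h1 h2
      simp only [List.length_reverse, List.length_ofFn, List.length_map] at h1 h2
      simp only [List.getElem_reverse, List.getElem_ofFn, List.getElem_map,
        List.length_ofFn, List.get_eq_getElem]
      congr 2
      show i = k - 1 - (k - 1 - i)
      have h1' : i < k := by simpa [hk] using h1
      omega

end Forward
section Join
open Finset
variable {n a : ℕ}

lemma perm_eq_one_of_le_one (hn : n ≤ 1) (w : Perm (Fin n)) : w = 1 := by
  apply Equiv.ext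
  intro i
  apply Fin.ext
  have h1 := i.2
  have h2 := (w i).2
  simp only [Equiv.Perm.one_apply]
  omega

lemma blockRev_sq {J : Finset ℕ} : blockRev n J * blockRev n J = 1 := by
  apply Equiv.ext
  intro i
  have h := blockRev_involutive (J := J) i
  simp only [Equiv.Perm.mul_apply, Equiv.Perm.one_apply]
  exact h

lemma blockRev_empty : blockRev n (∅ : Finset ℕ) = 1 := by
  apply Equiv.ext
  intro i
  apply Fin.ext
  simp only [Equiv.Perm.one_apply]
  rw [blockRev_coe]
  have h1 : loB (∅ : Finset ℕ) (i:ℕ) = (i:ℕ) := by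
    have h2 := loB_le (J := (∅ : Finset ℕ)) (i : ℕ)
    rcases Nat.eq_or_lt_of_le h2 with h | h
    · exact h
    · exact absurd (loB_prop (J := (∅:Finset ℕ)) (i:ℕ) (loB (∅:Finset ℕ) i) le_rfl h)
        (Finset.notMem_empty _)
  have h2 : hiB n (∅ : Finset ℕ) (i:ℕ) = (i:ℕ) := by
    have h3 := hiB_ge (J := (∅ : Finset ℕ)) (i:ℕ) i.2
    rcases Nat.eq_or_lt_of_le h3 with h | h
    · exact h.symm
    · exact absurd ((hiB_spec (J := (∅:Finset ℕ)) (i:ℕ) i.2).2 (i:ℕ) le_rfl h)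
        (Finset.notMem_empty _)
  omega

lemma blockRev_full_coe (i : Fin n) :
    (blockRev n (Finset.range (n-1)) i : ℕ) = n - 1 - (i:ℕ) := by
  rw [blockRev_coe]
  have h1 : loB (Finset.range (n-1)) (i:ℕ) = 0 := by
    have := loB_min (J := Finset.range (n-1)) (i := (i:ℕ)) (a := 0) (by
      intro t ht1 ht2
      rw [Finset.mem_range]
      have := i.2
      omega)
    omega
  have h2 : hiB n (Finset.range (n-1)) (i:ℕ) = n - 1 := by
    have ha := hiB_max (n := n) (J := Finset.range (n-1)) (i := (i:ℕ)) (b := n-1)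
      (by have := i.2; omega) (by
        intro t ht1 ht2
        rw [Finset.mem_range]
        omega)
    have hb := (hiB_spec (J := Finset.range (n-1)) (i:ℕ) i.2).1
    omega
  omega

/-- Join function. -/
def joinFun (han : a ≤ n) (u : Perm (Fin a)) (v : Perm (Fin (n - a))) : Fin n → Fin n :=
  fun i => if h : (i : ℕ) < a then ⟨(u ⟨i, h⟩ : ℕ), by have := (u ⟨i, h⟩).2; omega⟩
    else ⟨a + (v ⟨(i:ℕ) - a, by have := i.2; omega⟩ : ℕ), by
      have := (v ⟨(i:ℕ) - a, by have := i.2; omega⟩).2; omega⟩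

lemma joinFun_lt (han : a ≤ n) (u : Perm (Fin a)) (v : Perm (Fin (n - a)))
    {i : Fin n} (j : Fin a) (hij : (i : ℕ) = (j : ℕ)) :
    (joinFun han u v i : ℕ) = (u j : ℕ) := by
  have h : (i : ℕ) < a := by have := j.2; omega
  unfold joinFun
  rw [dif_pos h, Fin.val_mk]
  rw [show (⟨(i:ℕ), h⟩ : Fin a) = j from Fin.ext hij]

lemma joinFun_ge (han : a ≤ n) (u : Perm (Fin a)) (v : Perm (Fin (n - a)))
    {i : Fin n} (j : Fin (n - a)) (hij : (i : ℕ) = a + (j : ℕ)) :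
    (joinFun han u v i : ℕ) = a + (v j : ℕ) := by
  have h : ¬ (i : ℕ) < a := by omega
  unfold joinFun
  rw [dif_neg h, Fin.val_mk]
  rw [show (⟨(i:ℕ) - a, by have := i.2; omega⟩ : Fin (n - a)) = j from Fin.ext (by
    show (i:ℕ) - a = (j:ℕ); omega)]

/-- Join of a permutation of `[0,a)` and a permutation of `[a,n)`. -/
def joinPerm (han : a ≤ n) (u : Perm (Fin a)) (v : Perm (Fin (n - a))) :
    Perm (Fin n) where
  toFun := joinFun han u v
  invFun := joinFun han u⁻¹ v⁻¹
  left_inv := by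
    intro i
    apply Fin.ext
    by_cases h : (i : ℕ) < a
    · have e1 : (joinFun han u v i : ℕ) = (u ⟨(i:ℕ), h⟩ : ℕ) :=
        joinFun_lt han u v ⟨(i:ℕ), h⟩ rfl
      have e2 : (joinFun han u⁻¹ v⁻¹ (joinFun han u v i) : ℕ) = (u⁻¹ (u ⟨(i:ℕ), h⟩) : ℕ) :=
        joinFun_lt han u⁻¹ v⁻¹ (u ⟨(i:ℕ), h⟩) e1
      rw [e2, Equiv.Perm.inv_apply_self]
    · have hb : (i:ℕ) - a < n - a := by have := i.2; omega
      have e1 : (joinFun han u v i : ℕ) = a + (v ⟨(i:ℕ) - a, hb⟩ : ℕ) :=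
        joinFun_ge han u v ⟨(i:ℕ) - a, hb⟩ (show (i:ℕ) = a + ((i:ℕ) - a) by omega)
      have e2 : (joinFun han u⁻¹ v⁻¹ (joinFun han u v i) : ℕ) = a + (v⁻¹ (v ⟨(i:ℕ) - a, hb⟩) : ℕ) :=
        joinFun_ge han u⁻¹ v⁻¹ (v ⟨(i:ℕ) - a, hb⟩) e1
      rw [e2, Equiv.Perm.inv_apply_self]
      show a + ((i:ℕ) - a) = (i:ℕ)
      omega
  right_inv := by
    intro i
    apply Fin.ext
    by_cases h : (i : ℕ) < a
    · have e1 : (joinFun han u⁻¹ v⁻¹ i : ℕ) = (u⁻¹ ⟨(i:ℕ), h⟩ : ℕ) :=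
        joinFun_lt han u⁻¹ v⁻¹ ⟨(i:ℕ), h⟩ rfl
      have e2 : (joinFun han u v (joinFun han u⁻¹ v⁻¹ i) : ℕ) = (u (u⁻¹ ⟨(i:ℕ), h⟩) : ℕ) :=
        joinFun_lt han u v (u⁻¹ ⟨(i:ℕ), h⟩) e1
      rw [e2, Equiv.Perm.apply_inv_self]
    · have hb : (i:ℕ) - a < n - a := by have := i.2; omega
      have e1 : (joinFun han u⁻¹ v⁻¹ i : ℕ) = a + (v⁻¹ ⟨(i:ℕ) - a, hb⟩ : ℕ) :=
        joinFun_ge han u⁻¹ v⁻¹ ⟨(i:ℕ) - a, hb⟩ (show (i:ℕ) = a + ((i:ℕ) - a) by omega)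
      have e2 : (joinFun han u v (joinFun han u⁻¹ v⁻¹ i) : ℕ) = a + (v (v⁻¹ ⟨(i:ℕ) - a, hb⟩) : ℕ) :=
        joinFun_ge han u v (v⁻¹ ⟨(i:ℕ) - a, hb⟩) e1
      rw [e2, Equiv.Perm.apply_inv_self]
      show a + ((i:ℕ) - a) = (i:ℕ)
      omega

lemma joinPerm_coe_lt (han : a ≤ n) (u : Perm (Fin a)) (v : Perm (Fin (n - a)))
    {i : Fin n} (j : Fin a) (hij : (i : ℕ) = (j : ℕ)) :
    (joinPerm han u v i : ℕ) = (u j : ℕ) :=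
  joinFun_lt han u v j hij

lemma joinPerm_coe_ge (han : a ≤ n) (u : Perm (Fin a)) (v : Perm (Fin (n - a)))
    {i : Fin n} (j : Fin (n - a)) (hij : (i : ℕ) = a + (j : ℕ)) :
    (joinPerm han u v i : ℕ) = a + (v j : ℕ) :=
  joinFun_ge han u v j hij

lemma joinPerm_one (han : a ≤ n) : joinPerm han 1 (1 : Perm (Fin (n - a))) = 1 := by
  apply Equiv.ext
  intro i
  apply Fin.ext
  simp only [Equiv.Perm.one_apply]
  by_cases h : (i : ℕ) < a
  · rw [joinPerm_coe_lt han 1 1 ⟨(i:ℕ), h⟩ rfl]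
    rfl
  · have hb : (i:ℕ) - a < n - a := by have := i.2; omega
    rw [joinPerm_coe_ge han 1 1 ⟨(i:ℕ) - a, hb⟩ (show (i:ℕ) = a + ((i:ℕ) - a) by omega)]
    show a + ((i:ℕ) - a) = (i:ℕ)
    omega

lemma joinPerm_mul (han : a ≤ n) (u1 u2 : Perm (Fin a)) (v1 v2 : Perm (Fin (n - a))) :
    joinPerm han (u1 * u2) (v1 * v2) = joinPerm han u1 v1 * joinPerm han u2 v2 := by
  apply Equiv.ext
  intro i
  apply Fin.ext
  rw [Equiv.Perm.mul_apply]
  by_cases h : (i : ℕ) < a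
  · rw [joinPerm_coe_lt han _ _ ⟨(i:ℕ), h⟩ rfl, Equiv.Perm.mul_apply]
    have h2 : (joinPerm han u2 v2 i : ℕ) = (u2 ⟨(i:ℕ), h⟩ : ℕ) :=
      joinPerm_coe_lt han u2 v2 ⟨(i:ℕ), h⟩ rfl
    exact (joinPerm_coe_lt han u1 v1 (u2 ⟨(i:ℕ), h⟩) h2).symm
  · have hb : (i:ℕ) - a < n - a := by have := i.2; omega
    have hia : (i:ℕ) = a + ((i:ℕ) - a) := by omega
    rw [joinPerm_coe_ge han _ _ ⟨(i:ℕ) - a, hb⟩ hia, Equiv.Perm.mul_apply]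
    have h2 : (joinPerm han u2 v2 i : ℕ) = a + (v2 ⟨(i:ℕ) - a, hb⟩ : ℕ) :=
      joinPerm_coe_ge han u2 v2 ⟨(i:ℕ) - a, hb⟩ hia
    exact (joinPerm_coe_ge han u1 v1 (v2 ⟨(i:ℕ) - a, hb⟩) h2).symm

end Join
section Zip
open Finset
variable {n a : ℕ}

lemma blockRev_union (ha : 0 < a) (han : a ≤ n) {A B : Finset ℕ}
    (hA : A ⊆ Finset.range (a - 1)) (hB : B ⊆ Finset.range (n - a - 1)) :
    blockRev n (A ∪ B.image (· + a)) = joinPerm han (blockRev a A) (blockRev (n - a) B) := by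
  set U := A ∪ B.image (· + a) with hU
  have hmemA : ∀ t, t ∈ A → t + 1 < a := fun t ht => by
    have := hA ht; rw [Finset.mem_range] at this; omega
  have hmemB : ∀ t, t ∈ B → t + 1 < n - a := fun t ht => by
    have := hB ht; rw [Finset.mem_range] at this; omega
  have hUA : ∀ t, t < a → t ∈ U → t ∈ A := by
    intro t ht hm
    rw [hU, Finset.mem_union] at hm
    rcases hm with h' | h'
    · exact h'
    · rw [Finset.mem_image] at h'
      obtain ⟨b, hb, rfl⟩ := h'
      omega
  have hUB : ∀ t, a ≤ t → t ∈ U → (t - a) ∈ B := by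
    intro t ht hm
    rw [hU, Finset.mem_union] at hm
    rcases hm with h' | h'
    · have := hmemA t h'; omega
    · rw [Finset.mem_image] at h'
      obtain ⟨b, hb, rfl⟩ := h'
      simpa using hb
  have hBU : ∀ t, t ∈ B → t + a ∈ U := by
    intro t ht
    rw [hU, Finset.mem_union]
    exact Or.inr (Finset.mem_image.2 ⟨t, ht, rfl⟩)
  have haU : (a - 1) ∉ U := by
    intro hm
    rw [hU, Finset.mem_union] at hm
    rcases hm with h' | h'
    · have := hmemA _ h'; omega
    · rw [Finset.mem_image] at h'
      obtain ⟨b, hb, hba⟩ := h'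
      omega
  apply Equiv.ext
  intro i
  apply Fin.ext
  have hin := i.2
  by_cases h : (i : ℕ) < a
  · have hhiUlt : hiB n U (i:ℕ) < a := by
      by_contra hc
      push_neg at hc
      exact haU ((hiB_spec (J := U) (i:ℕ) i.2).2 (a-1) (by omega) (by omega))
    have hhiEq : hiB n U (i:ℕ) = hiB a A (i:ℕ) := by
      apply le_antisymm
      · apply hiB_max (n := a) (J := A) hhiUlt
        intro t h1 h2
        exact hUA t (by omega) ((hiB_spec (J := U) (i:ℕ) i.2).2 t h1 h2)
      · apply hiB_max (n := n) (J := U) (by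
          have := (hiB_spec (n := a) (J := A) (i:ℕ) h).1; omega)
        intro t h1 h2
        rw [hU, Finset.mem_union]
        exact Or.inl ((hiB_spec (n := a) (J := A) (i:ℕ) h).2 t h1 h2)
    have hloEq : loB U (i:ℕ) = loB A (i:ℕ) := by
      apply le_antisymm
      · exact loB_min (fun t h1 h2 => by
          rw [hU, Finset.mem_union]
          exact Or.inl (loB_prop (J := A) (i:ℕ) t h1 h2))
      · exact loB_min (fun t h1 h2 =>
          hUA t (by omega) (loB_prop (J := U) (i:ℕ) t h1 h2))
    have hL : (blockRev n U i : ℕ) = loB U (i:ℕ) + hiB n U (i:ℕ) - (i:ℕ) := blockRev_coe i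
    have hR : (joinPerm han (blockRev a A) (blockRev (n-a) B) i : ℕ)
        = (blockRev a A ⟨(i:ℕ), h⟩ : ℕ) := joinPerm_coe_lt han _ _ ⟨(i:ℕ), h⟩ rfl
    have hR2 : (blockRev a A ⟨(i:ℕ), h⟩ : ℕ) = loB A (i:ℕ) + hiB a A (i:ℕ) - (i:ℕ) :=
      blockRev_coe _
    omega
  · have hloGeA : a ≤ loB U (i:ℕ) := by
      by_contra hc
      push_neg at hc
      exact haU (loB_prop (J := U) (i:ℕ) (a-1) (by omega) (by omega))
    have hiag : (i:ℕ) - a < n - a := by omega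
    have hloEq : loB U (i:ℕ) = a + loB B ((i:ℕ) - a) := by
      apply le_antisymm
      · apply loB_min
        intro t h1 h2
        have ht : t - a ∈ B := loB_prop (J := B) ((i:ℕ) - a) (t - a) (by omega) (by omega)
        have := hBU _ ht
        rwa [show t - a + a = t by omega] at this
      · have : loB B ((i:ℕ) - a) ≤ loB U (i:ℕ) - a := by
          apply loB_min
          intro t h1 h2
          have hm := loB_prop (J := U) (i:ℕ) (t + a) (by omega) (by omega)
          have := hUB (t + a) (by omega) hm
          rwa [Nat.add_sub_cancel] at this
        omega
    have hhiEq : hiB n U (i:ℕ) = a + hiB (n - a) B ((i:ℕ) - a) := by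
      have hBspec := hiB_spec (n := n - a) (J := B) ((i:ℕ) - a) hiag
      have hUspec := hiB_spec (n := n) (J := U) (i:ℕ) i.2
      apply le_antisymm
      · have : hiB n U (i:ℕ) - a ≤ hiB (n - a) B ((i:ℕ) - a) := by
          apply hiB_max (by omega)
          intro t h1 h2
          have hm := hUspec.2 (t + a) (by omega) (by omega)
          have := hUB (t + a) (by omega) hm
          rwa [Nat.add_sub_cancel] at this
        have := hiB_ge (n := n) (J := U) (i:ℕ) i.2
        omega
      · apply hiB_max (by omega)
        intro t h1 h2
        have ht : t - a ∈ B := hBspec.2 (t - a) (by omega) (by omega)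
        have := hBU _ ht
        rwa [show t - a + a = t by omega] at this
    have hL : (blockRev n U i : ℕ) = loB U (i:ℕ) + hiB n U (i:ℕ) - (i:ℕ) := blockRev_coe i
    have hR : (joinPerm han (blockRev a A) (blockRev (n-a) B) i : ℕ)
        = a + (blockRev (n-a) B ⟨(i:ℕ) - a, hiag⟩ : ℕ) :=
      joinPerm_coe_ge han _ _ ⟨(i:ℕ) - a, hiag⟩ (show (i:ℕ) = a + ((i:ℕ) - a) by omega)
    have hR2 : (blockRev (n-a) B ⟨(i:ℕ) - a, hiag⟩ : ℕ)
        = loB B ((i:ℕ) - a) + hiB (n-a) B ((i:ℕ) - a) - ((i:ℕ) - a) := blockRev_coe _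
    have hge := hiB_ge (n := n - a) (J := B) ((i:ℕ) - a) hiag
    have hle := loB_le (J := B) ((i:ℕ) - a)
    omega

/-- Combine two chains, unioning levels from the top. -/
def zipU (a : ℕ) : List (Finset ℕ) → List (Finset ℕ) → List (Finset ℕ)
  | [], M => M.map (fun B => B.image (· + a))
  | K :: Ku, [] => K :: Ku
  | K :: Ku, M :: Mv => (K ∪ M.image (· + a)) :: zipU a Ku Mv

lemma zipU_nil_right (Lu : List (Finset ℕ)) : zipU a Lu [] = Lu := by
  cases Lu <;> rfl

lemma zipU_mem : ∀ (Lu Lv : List (Finset ℕ)) (X : Finset ℕ), X ∈ zipU a Lu Lv →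
    ∃ K M : Finset ℕ, (K = ∅ ∨ K ∈ Lu) ∧ (M = ∅ ∨ M ∈ Lv) ∧ (K ∈ Lu ∨ M ∈ Lv) ∧
      X = K ∪ M.image (· + a) := by
  intro Lu
  induction Lu with
  | nil =>
    intro Lv X hX
    rw [show zipU a [] Lv = Lv.map (fun B => B.image (· + a)) from rfl, List.mem_map] at hX
    obtain ⟨M, hM, rfl⟩ := hX
    exact ⟨∅, M, Or.inl rfl, Or.inr hM, Or.inr hM, by simp⟩
  | cons K Ku ihK =>
    intro Lv X hX
    cases Lv with
    | nil =>
      rw [zipU_nil_right] at hX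
      exact ⟨X, ∅, Or.inr hX, Or.inl rfl, Or.inl hX, by simp⟩
    | cons M Mv =>
      rw [show zipU a (K :: Ku) (M :: Mv) = (K ∪ M.image (· + a)) :: zipU a Ku Mv from rfl,
        List.mem_cons] at hX
      rcases hX with rfl | hX
      · exact ⟨K, M, Or.inr (List.mem_cons_self), Or.inr (List.mem_cons_self),
          Or.inl (List.mem_cons_self), rfl⟩
      · obtain ⟨K', M', h1, h2, h4, h3⟩ := ihK Mv X hX
        exact ⟨K', M', h1.imp_right (List.mem_cons_of_mem _),
          h2.imp_right (List.mem_cons_of_mem _),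
          h4.imp (List.mem_cons_of_mem _) (List.mem_cons_of_mem _), h3⟩

lemma zipU_props (han : a ≤ n) (Lu Lv : List (Finset ℕ))
    (hLu : ∀ K ∈ Lu, K.Nonempty ∧ K ⊆ Finset.range (a-1))
    (hLv : ∀ M ∈ Lv, M.Nonempty ∧ M ⊆ Finset.range (n-a-1)) :
    ∀ X ∈ zipU a Lu Lv, X.Nonempty ∧ X ⊆ Finset.range (n-1) := by
  intro X hX
  obtain ⟨K, M, h1, h2, h4, rfl⟩ := zipU_mem Lu Lv X hX
  constructor
  · rcases h4 with h4 | h4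
    · exact ((hLu K h4).1.mono Finset.subset_union_left)
    · exact (((hLv M h4).1.image _).mono Finset.subset_union_right)
  · intro x hx
    rw [Finset.mem_union] at hx
    rw [Finset.mem_range]
    rcases hx with hx | hx
    · rcases h1 with rfl | h1
      · exact absurd hx (Finset.notMem_empty _)
      · have := (hLu K h1).2 hx
        rw [Finset.mem_range] at this
        omega
    · rw [Finset.mem_image] at hx
      obtain ⟨b, hb, rfl⟩ := hx
      rcases h2 with rfl | h2
      · exact absurd hb (Finset.notMem_empty _)
      · have := (hLv M h2).2 hb
        rw [Finset.mem_range] at this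
        omega

end Zip
section Zip2
open Finset
variable {n a : ℕ}

lemma image_shift_ssubset {M' M : Finset ℕ} (h : M' ⊂ M) :
    M'.image (· + a) ⊂ M.image (· + a) := by
  rw [Finset.ssubset_iff_subset_ne]
  refine ⟨Finset.image_subset_image h.subset, ?_⟩
  intro heq
  have hinj : Function.Injective (· + a) := add_left_injective a
  exact h.ne (Finset.image_injective hinj heq)

lemma zipU_head_lt (ha : 0 < a) {K M : Finset ℕ} (hK : K.Nonempty)
    (hKr : K ⊆ Finset.range (a - 1)) {Ku Mv : List (Finset ℕ)}
    (hKu : ∀ K' ∈ Ku, K' ⊂ K) (hMv : ∀ M' ∈ Mv, M' ⊂ M) :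
    ∀ X ∈ zipU a Ku Mv, X ⊂ K ∪ M.image (· + a) := by
  intro X hX
  obtain ⟨K', M', h1, h2, h4, rfl⟩ := zipU_mem Ku Mv X hX
  have hsub : K' ∪ M'.image (· + a) ⊆ K ∪ M.image (· + a) := by
    apply Finset.union_subset_union
    · rcases h1 with rfl | h1
      · exact Finset.empty_subset _
      · exact (hKu K' h1).subset
    · rcases h2 with rfl | h2
      · simp
      · exact Finset.image_subset_image (hMv M' h2).subset
  rw [Finset.ssubset_iff_of_subset hsub]
  have hx : ∃ x ∈ K, x ∉ K' := by
    rcases h1 with rfl | h1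
    · obtain ⟨x, hx⟩ := hK
      exact ⟨x, hx, Finset.notMem_empty x⟩
    · exact Finset.exists_of_ssubset (hKu K' h1)
  obtain ⟨x, hxK, hxK'⟩ := hx
  refine ⟨x, Finset.mem_union_left _ hxK, ?_⟩
  rw [Finset.mem_union]
  rintro (hc | hc)
  · exact hxK' hc
  · rw [Finset.mem_image] at hc
    obtain ⟨b, _, hb⟩ := hc
    have := hKr hxK
    rw [Finset.mem_range] at this
    omega

lemma zipU_pairwise (ha : 0 < a) : ∀ (Lu Lv : List (Finset ℕ)),
    (∀ K ∈ Lu, K.Nonempty ∧ K ⊆ Finset.range (a-1)) →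
    Lu.Pairwise (fun A B => B ⊂ A) → Lv.Pairwise (fun A B => B ⊂ A) →
    (zipU a Lu Lv).Pairwise (fun A B => B ⊂ A) := by
  intro Lu
  induction Lu with
  | nil =>
    intro Lv _ _ hpv
    rw [show zipU a [] Lv = Lv.map (fun B => B.image (· + a)) from rfl, List.pairwise_map]
    exact hpv.imp image_shift_ssubset
  | cons K Ku ihK =>
    intro Lv hLu hpu hpv
    cases Lv with
    | nil =>
      rw [zipU_nil_right]
      exact hpu
    | cons M Mv =>
      rw [show zipU a (K :: Ku) (M :: Mv) = (K ∪ M.image (· + a)) :: zipU a Ku Mv from rfl]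
      rw [List.pairwise_cons] at hpu hpv ⊢
      refine ⟨?_, ihK Mv (fun K' hK' => hLu K' (List.mem_cons_of_mem _ hK')) hpu.2 hpv.2⟩
      exact zipU_head_lt ha (hLu K (List.mem_cons_self)).1
        (hLu K (List.mem_cons_self)).2 hpu.1 hpv.1

lemma zipU_prod (ha : 0 < a) (han : a ≤ n) : ∀ (Lu Lv : List (Finset ℕ)),
    (∀ K ∈ Lu, K ⊆ Finset.range (a-1)) →
    (∀ M ∈ Lv, M ⊆ Finset.range (n - a - 1)) →
    ((zipU a Lu Lv).map (blockRev n)).prod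
      = joinPerm han ((Lu.map (blockRev a)).prod) ((Lv.map (blockRev (n-a))).prod) := by
  intro Lu
  induction Lu with
  | nil =>
    intro Lv _ hLv
    induction Lv with
    | nil =>
      simp only [zipU, List.map_nil, List.prod_nil]
      exact (joinPerm_one han).symm
    | cons M Mv ihM =>
      rw [show zipU a [] (M :: Mv) = (M.image (· + a)) :: zipU a [] Mv from rfl]
      rw [List.map_cons, List.prod_cons, List.map_cons, List.prod_cons,
        ihM (fun M' hM' => hLv M' (List.mem_cons_of_mem _ hM'))]
      have h1 : blockRev n (M.image (· + a)) = joinPerm han 1 (blockRev (n-a) M) := by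
        have := blockRev_union ha han (A := ∅) (B := M) (Finset.empty_subset _)
          (hLv M (List.mem_cons_self))
        rw [Finset.empty_union] at this
        rw [this, blockRev_empty]
      rw [h1, ← joinPerm_mul, one_mul]
  | cons K Ku ihK =>
    intro Lv hLu hLv
    cases Lv with
    | nil =>
      rw [zipU_nil_right, List.map_nil, List.prod_nil]
      have hKr : blockRev n K = joinPerm han (blockRev a K) 1 := by
        have := blockRev_union ha han (A := K) (B := ∅) (hLu K (List.mem_cons_self))
          (Finset.empty_subset _)
        rw [Finset.image_empty, Finset.union_empty] at this
        rw [this, blockRev_empty]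
      rw [List.map_cons, List.prod_cons, List.map_cons, List.prod_cons, hKr]
      have := ihK [] (fun K' hK' => hLu K' (List.mem_cons_of_mem _ hK'))
        (fun M hM => absurd hM List.not_mem_nil)
      rw [zipU_nil_right] at this
      rw [this, ← joinPerm_mul, one_mul]
      rfl
    | cons M Mv =>
      rw [show zipU a (K :: Ku) (M :: Mv) = (K ∪ M.image (· + a)) :: zipU a Ku Mv from rfl]
      rw [List.map_cons, List.prod_cons, List.map_cons, List.prod_cons,
        List.map_cons, List.prod_cons]
      rw [ihK Mv (fun K' hK' => hLu K' (List.mem_cons_of_mem _ hK'))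
        (fun M' hM' => hLv M' (List.mem_cons_of_mem _ hM'))]
      rw [blockRev_union ha han (hLu K (List.mem_cons_self)) (hLv M (List.mem_cons_self))]
      rw [← joinPerm_mul]

lemma descending_join (ha : 0 < a) (han : a < n) {u : Perm (Fin a)} {v : Perm (Fin (n-a))}
    (hu : Descending a u) (hv : Descending (n-a) v) :
    Descending n (joinPerm (le_of_lt han) u v) := by
  obtain ⟨Lu, hLu, hpu, hup⟩ := descending_elim hu
  obtain ⟨Lv, hLv, hpv, hvp⟩ := descending_elim hv
  apply descending_intro (zipU a Lu Lv)
  · exact zipU_props (le_of_lt han) Lu Lv hLu hLv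
  · exact zipU_pairwise ha Lu Lv hLu hpu hpv
  · rw [zipU_prod ha (le_of_lt han) Lu Lv (fun K hK => (hLu K hK).2) (fun M hM => (hLv M hM).2),
      ← hup, ← hvp]

end Zip2

section Compl
open Finset
variable {n a : ℕ}

lemma descending_w0_mul {w : Perm (Fin n)} (h : Descending n w) :
    Descending n (blockRev n (Finset.range (n-1)) * w) := by
  by_cases hn : n ≤ 1
  · rw [perm_eq_one_of_le_one hn (blockRev n (Finset.range (n-1)) * w)]
    exact descending_one
  push_neg at hn
  obtain ⟨L, hprops, hpw, rfl⟩ := descending_elim h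
  cases L with
  | nil =>
    apply descending_intro [Finset.range (n-1)]
    · intro J hJ
      rw [List.mem_singleton] at hJ
      subst hJ
      exact ⟨Finset.nonempty_range_iff.2 (by omega), le_refl _⟩
    · simp
    · simp
  | cons J rest =>
    by_cases hJ : J = Finset.range (n-1)
    · subst hJ
      apply descending_intro rest
      · intro K hK; exact hprops K (List.mem_cons_of_mem _ hK)
      · exact (List.pairwise_cons.1 hpw).2
      · rw [List.map_cons, List.prod_cons, ← mul_assoc, blockRev_sq, one_mul]
    · apply descending_intro (Finset.range (n-1) :: J :: rest)
      · intro K hK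
        rcases List.mem_cons.1 hK with rfl | hK
        · exact ⟨Finset.nonempty_range_iff.2 (by omega), le_refl _⟩
        · exact hprops K hK
      · rw [List.pairwise_cons]
        refine ⟨?_, hpw⟩
        intro K hK
        rcases List.mem_cons.1 hK with rfl | hK
        · exact Finset.ssubset_iff_subset_ne.2 ⟨(hprops K (List.mem_cons_self)).2, hJ⟩
        · have h1 : K ⊂ J := (List.pairwise_cons.1 hpw).1 K hK
          exact Finset.ssubset_of_ssubset_of_subset h1 (hprops J (List.mem_cons_self)).2
      · rw [List.map_cons, List.prod_cons, List.map_cons, List.prod_cons,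
          List.map_cons, List.prod_cons]

lemma separable_w0_mul {w : Perm (Fin n)} (h : Separable n w) :
    Separable n (blockRev n (Finset.range (n-1)) * w) := by
  rintro ⟨i1, i2, i3, i4, h12, h23, h34, hc⟩
  apply h
  refine ⟨i1, i2, i3, i4, h12, h23, h34, ?_⟩
  have hval : ∀ i : Fin n, ((blockRev n (Finset.range (n-1)) * w) i : ℕ) = n - 1 - (w i : ℕ) :=
    fun i => blockRev_full_coe (w i)
  have e1 := hval i1
  have e2 := hval i2
  have e3 := hval i3
  have e4 := hval i4
  have b1 := (w i1).2
  have b2 := (w i2).2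
  have b3 := (w i3).2
  have b4 := (w i4).2
  rcases hc with ⟨x, y, z⟩ | ⟨x, y, z⟩
  · rw [Fin.lt_def] at x y z
    exact Or.inr ⟨by rw [Fin.lt_def]; omega, by rw [Fin.lt_def]; omega, by rw [Fin.lt_def]; omega⟩
  · rw [Fin.lt_def] at x y z
    exact Or.inl ⟨by rw [Fin.lt_def]; omega, by rw [Fin.lt_def]; omega, by rw [Fin.lt_def]; omega⟩

/-- Restriction of a prefix-preserving permutation to the prefix. -/
def resLow (han : a ≤ n) (w : Perm (Fin n)) (hw : ∀ i : Fin n, (i:ℕ) < a ↔ (w i : ℕ) < a) :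
    Perm (Fin a) where
  toFun x := ⟨(w ⟨(x:ℕ), by have := x.2; omega⟩ : ℕ), (hw _).1 x.2⟩
  invFun x := ⟨(w⁻¹ ⟨(x:ℕ), by have := x.2; omega⟩ : ℕ), by
    apply (hw (w⁻¹ ⟨(x:ℕ), by have := x.2; omega⟩)).2
    rw [Equiv.Perm.apply_inv_self]
    exact x.2⟩
  left_inv := by
    intro x
    apply Fin.ext
    dsimp only
    rw [Fin.eta, Equiv.Perm.inv_apply_self]
  right_inv := by
    intro x
    apply Fin.ext
    dsimp only
    rw [Fin.eta, Equiv.Perm.apply_inv_self]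

lemma resLow_coe (han : a ≤ n) (w : Perm (Fin n)) (hw : ∀ i : Fin n, (i:ℕ) < a ↔ (w i : ℕ) < a)
    (x : Fin a) (j : Fin n) (hj : (j : ℕ) = (x : ℕ)) :
    (resLow han w hw x : ℕ) = (w j : ℕ) := by
  show (w ⟨(x:ℕ), by have := x.2; omega⟩ : ℕ) = (w j : ℕ)
  exact congrArg (fun t : Fin n => ((w t : Fin n) : ℕ)) (Fin.ext (show (x:ℕ) = (j:ℕ) from hj.symm))

/-- Underlying function of the suffix restriction. -/
def shrinkFun (w : Perm (Fin n)) : Fin (n - a) → Fin (n - a) :=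
  fun x => ⟨(w ⟨a + (x:ℕ), by have := x.2; omega⟩ : ℕ) - a, by
    have h1 : ∀ j : Fin n, (w j : ℕ) - a < n - a := fun j => by
      have h2 := (w j).2
      have h3 := x.2
      omega
    exact h1 _⟩

lemma shrinkFun_coe (w : Perm (Fin n)) (x : Fin (n - a)) (j : Fin n)
    (hj : (j : ℕ) = a + (x : ℕ)) : (shrinkFun w x : ℕ) = (w j : ℕ) - a := by
  unfold shrinkFun
  rw [Fin.val_mk]
  exact congrArg (fun t : Fin n => ((w t : Fin n) : ℕ) - a)
    (Fin.ext (show a + (x:ℕ) = (j:ℕ) from hj.symm))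

/-- Restriction of a prefix-preserving permutation to the complementary suffix. -/
def resHigh (han : a ≤ n) (w : Perm (Fin n))
    (hw : ∀ i : Fin n, (i:ℕ) < a ↔ (w i : ℕ) < a) : Perm (Fin (n - a)) where
  toFun := shrinkFun w
  invFun := shrinkFun w⁻¹
  left_inv := by
    intro x
    apply Fin.ext
    obtain ⟨j, hj⟩ : ∃ j : Fin n, (j:ℕ) = a + (x:ℕ) :=
      ⟨⟨a + (x:ℕ), by have := x.2; omega⟩, rfl⟩
    have hge : ¬ (w j : ℕ) < a := by
      intro hc
      have := (hw j).2 hc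
      omega
    have e1 : (shrinkFun w x : ℕ) = (w j : ℕ) - a := shrinkFun_coe w x j hj
    have e2 : (shrinkFun w⁻¹ (shrinkFun w x) : ℕ) = (w⁻¹ (w j) : ℕ) - a :=
      shrinkFun_coe w⁻¹ (shrinkFun w x) (w j) (by omega)
    rw [e2, Equiv.Perm.inv_apply_self]
    omega
  right_inv := by
    intro x
    apply Fin.ext
    obtain ⟨j, hj⟩ : ∃ j : Fin n, (j:ℕ) = a + (x:ℕ) :=
      ⟨⟨a + (x:ℕ), by have := x.2; omega⟩, rfl⟩
    have hge : ¬ (w⁻¹ j : ℕ) < a := by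
      intro hc
      have := (hw (w⁻¹ j)).1 hc
      rw [Equiv.Perm.apply_inv_self] at this
      omega
    have e1 : (shrinkFun w⁻¹ x : ℕ) = (w⁻¹ j : ℕ) - a := shrinkFun_coe w⁻¹ x j hj
    have e2 : (shrinkFun w (shrinkFun w⁻¹ x) : ℕ) = (w (w⁻¹ j) : ℕ) - a :=
      shrinkFun_coe w (shrinkFun w⁻¹ x) (w⁻¹ j) (by omega)
    rw [e2, Equiv.Perm.apply_inv_self]
    omega

lemma resHigh_coe (han : a ≤ n) (w : Perm (Fin n)) (hw : ∀ i : Fin n, (i:ℕ) < a ↔ (w i : ℕ) < a)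
    (x : Fin (n - a)) (j : Fin n) (hj : (j : ℕ) = a + (x : ℕ)) :
    (resHigh han w hw x : ℕ) = (w j : ℕ) - a :=
  shrinkFun_coe w x j hj

lemma join_res (han : a ≤ n) (w : Perm (Fin n)) (hw : ∀ i : Fin n, (i:ℕ) < a ↔ (w i : ℕ) < a) :
    w = joinPerm han (resLow han w hw) (resHigh han w hw) := by
  apply Equiv.ext
  intro i
  apply Fin.ext
  by_cases h : (i : ℕ) < a
  · rw [joinPerm_coe_lt han _ _ ⟨(i:ℕ), h⟩ rfl,
      resLow_coe han w hw ⟨(i:ℕ), h⟩ i rfl]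
  · have hb : (i:ℕ) - a < n - a := by have := i.2; omega
    rw [joinPerm_coe_ge han _ _ ⟨(i:ℕ) - a, hb⟩ (show (i:ℕ) = a + ((i:ℕ) - a) by omega),
      resHigh_coe han w hw ⟨(i:ℕ) - a, hb⟩ i (by show (i:ℕ) = a + ((i:ℕ) - a); omega)]
    have hge : ¬ ((w i : Fin n) : ℕ) < a := fun hc => h ((hw i).2 hc)
    omega

lemma separable_resLow (han : a ≤ n) (w : Perm (Fin n))
    (hw : ∀ i : Fin n, (i:ℕ) < a ↔ (w i : ℕ) < a) (hsep : Separable n w) :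
    Separable a (resLow han w hw) := by
  rintro ⟨i1, i2, i3, i4, h12, h23, h34, hc⟩
  have cast : ∀ x : Fin a, ∃ j : Fin n, (j:ℕ) = (x:ℕ) ∧
      (resLow han w hw x : ℕ) = (w j : ℕ) := fun x =>
    ⟨⟨(x:ℕ), by have := x.2; omega⟩, rfl, resLow_coe han w hw x _ rfl⟩
  obtain ⟨j1, hj1, e1⟩ := cast i1
  obtain ⟨j2, hj2, e2⟩ := cast i2
  obtain ⟨j3, hj3, e3⟩ := cast i3
  obtain ⟨j4, hj4, e4⟩ := cast i4
  apply hsep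
  refine ⟨j1, j2, j3, j4, ?_, ?_, ?_, ?_⟩
  · rw [Fin.lt_def] at h12 ⊢; omega
  · rw [Fin.lt_def] at h23 ⊢; omega
  · rw [Fin.lt_def] at h34 ⊢; omega
  · rcases hc with ⟨x, y, z⟩ | ⟨x, y, z⟩ <;> rw [Fin.lt_def] at x y z
    · exact Or.inl ⟨by rw [Fin.lt_def]; omega, by rw [Fin.lt_def]; omega,
        by rw [Fin.lt_def]; omega⟩
    · exact Or.inr ⟨by rw [Fin.lt_def]; omega, by rw [Fin.lt_def]; omega,
        by rw [Fin.lt_def]; omega⟩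

lemma separable_resHigh (han : a ≤ n) (w : Perm (Fin n))
    (hw : ∀ i : Fin n, (i:ℕ) < a ↔ (w i : ℕ) < a) (hsep : Separable n w) :
    Separable (n - a) (resHigh han w hw) := by
  rintro ⟨i1, i2, i3, i4, h12, h23, h34, hc⟩
  have cast : ∀ x : Fin (n - a), ∃ j : Fin n, (j:ℕ) = a + (x:ℕ) ∧
      (resHigh han w hw x : ℕ) = (w j : ℕ) - a ∧ a ≤ (w j : ℕ) := by
    intro x
    obtain ⟨j, hj⟩ : ∃ j : Fin n, (j:ℕ) = a + (x:ℕ) :=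
      ⟨⟨a + (x:ℕ), by have := x.2; omega⟩, rfl⟩
    refine ⟨j, hj, resHigh_coe han w hw x j hj, ?_⟩
    by_contra hc2
    push_neg at hc2
    have := (hw j).2 hc2
    omega
  obtain ⟨j1, hj1, e1, f1⟩ := cast i1
  obtain ⟨j2, hj2, e2, f2⟩ := cast i2
  obtain ⟨j3, hj3, e3, f3⟩ := cast i3
  obtain ⟨j4, hj4, e4, f4⟩ := cast i4
  apply hsep
  refine ⟨j1, j2, j3, j4, ?_, ?_, ?_, ?_⟩
  · rw [Fin.lt_def] at h12 ⊢; omega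
  · rw [Fin.lt_def] at h23 ⊢; omega
  · rw [Fin.lt_def] at h34 ⊢; omega
  · rcases hc with ⟨x, y, z⟩ | ⟨x, y, z⟩ <;> rw [Fin.lt_def] at x y z
    · exact Or.inl ⟨by rw [Fin.lt_def]; omega, by rw [Fin.lt_def]; omega,
        by rw [Fin.lt_def]; omega⟩
    · exact Or.inr ⟨by rw [Fin.lt_def]; omega, by rw [Fin.lt_def]; omega,
        by rw [Fin.lt_def]; omega⟩

end Compl

section Main
open Finset
variable {n : ℕ}

lemma card_filter_val_lt (c : ℕ) (hc : c ≤ n) :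
    (Finset.univ.filter (fun i : Fin n => (i:ℕ) < c)).card = c := by
  have h : (Finset.univ.filter (fun i : Fin n => (i:ℕ) < c)).card = (Finset.range c).card := by
    refine Finset.card_bij' (fun i _ => (i : ℕ))
      (fun x hx => (⟨x, ?_⟩ : Fin n)) ?_ ?_ ?_ ?_
    · rw [Finset.mem_range] at hx
      omega
    · intro a ha
      rw [Finset.mem_range]
      exact (Finset.mem_filter.1 ha).2
    · intro x hx
      rw [Finset.mem_filter]
      refine ⟨Finset.mem_univ _, ?_⟩
      rw [Finset.mem_range] at hx
      exact hx
    · intro a _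
      exact Fin.ext rfl
    · intro x _
      rfl
  rw [h, Finset.card_range]

lemma card_filter_w_lt (w : Perm (Fin n)) (c : ℕ) (hc : c ≤ n) :
    (Finset.univ.filter (fun i : Fin n => (w i : ℕ) < c)).card = c := by
  have h : (Finset.univ.filter (fun i : Fin n => (w i : ℕ) < c)).card
      = (Finset.univ.filter (fun i : Fin n => (i:ℕ) < c)).card := by
    apply Finset.card_bij' (fun i _ => w i) (fun i _ => w⁻¹ i)
    · intro a ha
      rw [Finset.mem_filter] at ha ⊢
      exact ⟨Finset.mem_univ _, ha.2⟩
    · intro a ha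
      rw [Finset.mem_filter] at ha ⊢
      refine ⟨Finset.mem_univ _, ?_⟩
      rw [Equiv.Perm.apply_inv_self]
      exact ha.2
    · intro a _
      rw [Equiv.Perm.inv_apply_self]
    · intro a _
      rw [Equiv.Perm.apply_inv_self]
  rw [h]
  exact card_filter_val_lt c hc

lemma sum_dec (hn : 2 ≤ n) (w : Perm (Fin n)) (hsep : Separable n w)
    (z t : Fin n) (hz : (z:ℕ) = 0) (ht : (t:ℕ) = n - 1)
    (hpos : (w⁻¹ z : ℕ) < (w⁻¹ t : ℕ)) :
    ∃ a, 0 < a ∧ a < n ∧ ∀ i : Fin n, ((i:ℕ) < a ↔ (w i : ℕ) < a) := by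
  set k := w⁻¹ z with hk
  set l := w⁻¹ t with hl
  have hwk : w k = z := Equiv.Perm.apply_inv_self w z
  have hwl : w l = t := Equiv.Perm.apply_inv_self w t
  by_cases hk0 : (k:ℕ) = 0
  · refine ⟨1, by omega, by omega, ?_⟩
    intro i
    constructor
    · intro hi
      have : i = k := Fin.ext (by omega)
      rw [this, hwk]
      omega
    · intro hi
      have : w i = z := Fin.ext (by omega)
      have : i = k := by rw [hk, ← this, Equiv.Perm.inv_apply_self]
      omega
  · -- k ≥ 1
    set S := Finset.univ.filter (fun i : Fin n => (i:ℕ) ≤ (k:ℕ)) with hS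
    set m := S.sup (fun i => (w i : ℕ)) with hm
    have hmem_le : ∀ i : Fin n, (i:ℕ) ≤ (k:ℕ) → (w i : ℕ) ≤ m := by
      intro i hi
      exact Finset.le_sup (s := S) (f := fun i : Fin n => (w i : ℕ))
        (Finset.mem_filter.2 ⟨Finset.mem_univ i, hi⟩)
    obtain ⟨i0, hi0S, hi0⟩ := Finset.exists_mem_eq_sup S ⟨k, Finset.mem_filter.2
      ⟨Finset.mem_univ _, le_rfl⟩⟩ (fun i => (w i : ℕ))
    have hi0k : (i0:ℕ) ≤ (k:ℕ) := (Finset.mem_filter.1 hi0S).2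
    have hwi0 : (w i0 : ℕ) = m := hi0.symm
    have hm1 : 1 ≤ m := by
      by_contra hc
      push_neg at hc
      obtain ⟨z0, hz0⟩ : ∃ z0 : Fin n, (z0 : ℕ) = 0 := ⟨⟨0, by omega⟩, rfl⟩
      have h1 := hmem_le z0 (by omega)
      have h2 : w z0 = z := Fin.ext (by omega)
      have h3 : z0 = k := by rw [hk, ← h2, Equiv.Perm.inv_apply_self]
      omega
    have hmn : m < n - 1 := by
      have hmlt : m < n := by rw [← hwi0]; exact (w i0).2
      rcases Nat.lt_or_ge m (n-1) with h | h
      · exact h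
      · exfalso
        have h2 : w i0 = t := Fin.ext (by omega)
        have h3 : i0 = l := by rw [hl, ← h2, Equiv.Perm.inv_apply_self]
        omega
    have hi0kS : (i0:ℕ) < (k:ℕ) := by
      rcases Nat.lt_or_ge (i0:ℕ) (k:ℕ) with h | h
      · exact h
      · exfalso
        have : i0 = k := Fin.ext (by omega)
        rw [this, hwk] at hwi0
        omega
    have hdc : ∀ p q : Fin n, (p:ℕ) < (q:ℕ) → (w q : ℕ) < m + 1 → (w p : ℕ) < m + 1 := by
      intro p q hpq hwq
      by_contra hwp
      push_neg at hwp
      have hpk : (k:ℕ) < (p:ℕ) := by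
        rcases Nat.lt_or_ge (k:ℕ) (p:ℕ) with h | h
        · exact h
        · exfalso
          have := hmem_le p h
          omega
      have hq0 : (w q : ℕ) ≠ 0 := by
        intro hc
        have h2 : w q = z := Fin.ext (by omega)
        have h3 : q = k := by rw [hk, ← h2, Equiv.Perm.inv_apply_self]
        omega
      have hqm : (w q : ℕ) ≠ m := by
        intro hc
        have h2 : w q = w i0 := Fin.ext (by omega)
        have h3 : q = i0 := w.injective h2
        omega
      apply hsep
      refine ⟨i0, k, p, q, ?_, ?_, ?_, Or.inr ⟨?_, ?_, ?_⟩⟩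
      · rw [Fin.lt_def]; omega
      · rw [Fin.lt_def]; omega
      · rw [Fin.lt_def]; omega
      · rw [Fin.lt_def]
        have : (w k : ℕ) = 0 := by rw [hwk]; omega
        omega
      · rw [Fin.lt_def]; omega
      · rw [Fin.lt_def]; omega
    have cardT : (Finset.univ.filter (fun i : Fin n => (w i : ℕ) < m + 1)).card = m + 1 :=
      card_filter_w_lt w (m+1) (by omega)
    refine ⟨m + 1, by omega, by omega, ?_⟩
    intro i
    constructor
    · intro hi
      by_contra hwi
      push_neg at hwi
      -- T ⊆ {j : j.val < i.val}
      have hsub : (Finset.univ.filter (fun j : Fin n => (w j : ℕ) < m + 1))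
          ⊆ (Finset.univ.filter (fun j : Fin n => (j:ℕ) < (i:ℕ))) := by
        intro q hq
        rw [Finset.mem_filter] at hq ⊢
        refine ⟨Finset.mem_univ _, ?_⟩
        rcases Nat.lt_trichotomy (q:ℕ) (i:ℕ) with h | h | h
        · exact h
        · exfalso
          have : q = i := Fin.ext h
          subst this
          omega
        · exfalso
          have := hdc i q h hq.2
          omega
      have hcard := Finset.card_le_card hsub
      rw [cardT, card_filter_val_lt (i:ℕ) (by have := i.2; omega)] at hcard
      omega
    · intro hwi
      by_contra hi
      push_neg at hi
      -- {j : j.val ≤ i.val} ⊆ T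
      have hsub : (Finset.univ.filter (fun j : Fin n => (j:ℕ) < (i:ℕ) + 1))
          ⊆ (Finset.univ.filter (fun j : Fin n => (w j : ℕ) < m + 1)) := by
        intro q hq
        rw [Finset.mem_filter] at hq ⊢
        refine ⟨Finset.mem_univ _, ?_⟩
        rcases Nat.lt_trichotomy (q:ℕ) (i:ℕ) with h | h | h
        · exact hdc q i h hwi
        · have : q = i := Fin.ext h
          subst this
          exact hwi
        · exfalso
          omega
      have hcard := Finset.card_le_card hsub
      rw [cardT, card_filter_val_lt ((i:ℕ) + 1) (by have := i.2; omega)] at hcard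
      omega

lemma descending_of_separable : ∀ (m : ℕ) (w : Perm (Fin m)), Separable m w → Descending m w := by
  intro m
  induction m using Nat.strong_induction_on with
  | _ n ih =>
    intro w hsep
    by_cases hn : n ≤ 1
    · rw [perm_eq_one_of_le_one hn w]
      exact descending_one
    push_neg at hn
    obtain ⟨zero, hzero⟩ : ∃ z : Fin n, (z:ℕ) = 0 := ⟨⟨0, by omega⟩, rfl⟩
    obtain ⟨top, htop⟩ : ∃ z : Fin n, (z:ℕ) = n - 1 := ⟨⟨n-1, by omega⟩, rfl⟩
    have key : ∀ v : Perm (Fin n), Separable n v →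
        (v⁻¹ zero : ℕ) < (v⁻¹ top : ℕ) → Descending n v := by
      intro v hsepv hpos
      obtain ⟨a, ha0, han, hprefix⟩ := sum_dec (by omega) v hsepv zero top hzero htop hpos
      have hu := ih a (by omega) (resLow (le_of_lt han) v hprefix)
        (separable_resLow (le_of_lt han) v hprefix hsepv)
      have hv := ih (n - a) (by omega) (resHigh (le_of_lt han) v hprefix)
        (separable_resHigh (le_of_lt han) v hprefix hsepv)
      have hd := descending_join ha0 han hu hv
      rwa [← join_res (le_of_lt han) v hprefix] at hd
    have hne : (w⁻¹ zero : ℕ) ≠ (w⁻¹ top : ℕ) := by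
      intro hc
      have h1 : w⁻¹ zero = w⁻¹ top := Fin.ext hc
      have h2 := w⁻¹.injective h1
      rw [Fin.ext_iff] at h2
      omega
    rcases Nat.lt_or_ge (w⁻¹ zero : ℕ) (w⁻¹ top : ℕ) with hlt | hge
    · exact key w hsep hlt
    · have hgt : (w⁻¹ top : ℕ) < (w⁻¹ zero : ℕ) := by omega
      set w2 := blockRev n (Finset.range (n-1)) * w with hw2
      have hsep2 : Separable n w2 := separable_w0_mul hsep
      have hvz : w2 (w⁻¹ top) = zero := by
        rw [hw2, Equiv.Perm.mul_apply, Equiv.Perm.apply_inv_self]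
        apply Fin.ext
        rw [blockRev_full_coe]
        omega
      have hvt : w2 (w⁻¹ zero) = top := by
        rw [hw2, Equiv.Perm.mul_apply, Equiv.Perm.apply_inv_self]
        apply Fin.ext
        rw [blockRev_full_coe]
        omega
      have h20 : w2⁻¹ zero = w⁻¹ top := by rw [← hvz, Equiv.Perm.inv_apply_self]
      have h2t : w2⁻¹ top = w⁻¹ zero := by rw [← hvt, Equiv.Perm.inv_apply_self]
      have hpos2 : (w2⁻¹ zero : ℕ) < (w2⁻¹ top : ℕ) := by
        rw [h20, h2t]
        omega
      have hd2 := key w2 hsep2 hpos2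
      have hd3 := descending_w0_mul hd2
      rwa [hw2, ← mul_assoc, blockRev_sq, one_mul] at hd3

theorem descending_iff_separable' (w : Perm (Fin n)) :
    Descending n w ↔ Separable n w :=
  ⟨separable_of_descending, descending_of_separable n w⟩

end Main

/-- A permutation is descending if and only if it is separable (avoids `2413` and `3142`). -/
theorem descending_iff_separable (n : ℕ) (w : Perm (Fin n)) :
    Descending n w ↔ Separable n w :=
  ⟨separable_of_descending, descending_of_separable n w⟩

end KLPaper
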